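/- arXiv:1108.5832 — 8 statements merged into one kernel-verified Lean document; each statement's English description precedes it below -/
import Mathlib

section
/- If A ⊆ ℕ is infinite and r⁺(n,A) = #{(a,a') : a + a' = n, a ≤ a', a,a' ∈ A} is constant for all sufficiently large n, then a contradiction follows; i.e., r⁺(n,A) cannot be eventually constant for any infinite set A. -/
open Finset in
lemma card_antidiag_split (A : Set ℕ) [DecidablePred (· ∈ A)] (n : ℕ) :
    ((antidiagonal n).filter (fun p => p.1 ∈ A ∧ p.2 ∈ A)).card
      + (if n % 2 = 0 ∧ n / 2 ∈ A then 1 else 0)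
    = 2 * ((antidiagonal n).filter (fun p => p.1 ∈ A ∧ p.2 ∈ A ∧ p.1 ≤ p.2)).card := by
  classical
  set Rn := (antidiagonal n).filter (fun p => p.1 ∈ A ∧ p.2 ∈ A ∧ p.1 ≤ p.2) with hRn
  set Ln := (antidiagonal n).filter (fun p => p.1 ∈ A ∧ p.2 ∈ A ∧ p.2 ≤ p.1) with hLn
  have hUnion : Rn ∪ Ln = (antidiagonal n).filter (fun p => p.1 ∈ A ∧ p.2 ∈ A) := by
    ext p
    simp only [hRn, hLn, mem_union, mem_filter, Finset.HasAntidiagonal.mem_antidiagonal]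
    rcases le_total p.1 p.2 with h | h <;> tauto
  have hInter : Rn ∩ Ln = if n % 2 = 0 ∧ n / 2 ∈ A then {(n / 2, n / 2)} else (∅ : Finset (ℕ × ℕ)) := by
    ext p
    simp only [hRn, hLn, mem_inter, mem_filter, Finset.HasAntidiagonal.mem_antidiagonal]
    split_ifs with hc
    · simp only [mem_singleton, Prod.ext_iff]
      constructor
      · rintro ⟨⟨hs, h1, h2, h12⟩, -, -, -, h21⟩
        have : p.1 = p.2 := le_antisymm h12 h21
        omega
      · rintro ⟨h1, h2⟩
        obtain ⟨hev, hmem⟩ := hc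
        constructor
        · exact ⟨by omega, by rw [h1]; exact hmem, by rw [h2]; exact hmem, by omega⟩
        · exact ⟨by omega, by rw [h1]; exact hmem, by rw [h2]; exact hmem, by omega⟩
    · simp only [Finset.notMem_empty, iff_false]
      rintro ⟨⟨hs, h1, h2, h12⟩, -, -, -, h21⟩
      have hpe : p.1 = p.2 := le_antisymm h12 h21
      have h12' : p.1 = n / 2 := by omega
      exact hc ⟨by omega, h12' ▸ h1⟩
  have hLR : Ln.card = Rn.card := by
    have himg : Ln = Rn.image Prod.swap := by
      ext p
      simp only [hRn, hLn, Finset.mem_image, mem_filter, Finset.HasAntidiagonal.mem_antidiagonal]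
      constructor
      · rintro ⟨hs, h1, h2, h21⟩
        exact ⟨p.swap, ⟨by simp [Prod.swap, add_comm] at *; omega, h2, h1, h21⟩, Prod.swap_swap p⟩
      · rintro ⟨q, ⟨hs, h1, h2, h12⟩, rfl⟩
        exact ⟨by simpa [add_comm] using hs, h2, h1, h12⟩
    rw [himg, Finset.card_image_of_injective _ Prod.swap_injective]
  have := Finset.card_union_add_card_inter Rn Ln
  rw [hUnion, hInter, hLR] at this
  split_ifs at this ⊢ <;> simp at this ⊢ <;> omega

open Finset in
/-- Erdős–Turán / Dirac: for an infinite set `A ⊆ ℕ`, the representation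
function `r⁺(n,A) = #{(a,a') ∈ A² : a + a' = n, a ≤ a'}` cannot be constant
for all sufficiently large `n`. -/
theorem rplus_not_eventually_constant (A : Set ℕ) (hA : A.Infinite)
    (c N : ℕ)
    (h : ∀ n ≥ N,
      {p : ℕ × ℕ | p.1 ∈ A ∧ p.2 ∈ A ∧ p.1 ≤ p.2 ∧ p.1 + p.2 = n}.ncard = c) :
    False := by
  classical
  set R : ℕ → Finset (ℕ × ℕ) := fun n => (antidiagonal n).filter
      (fun p => p.1 ∈ A ∧ p.2 ∈ A ∧ p.1 ≤ p.2) with hRdef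
  have hset : ∀ n, {p : ℕ × ℕ | p.1 ∈ A ∧ p.2 ∈ A ∧ p.1 ≤ p.2 ∧ p.1 + p.2 = n} = ↑(R n) := by
    intro n; ext p
    simp only [hRdef, coe_filter, Finset.HasAntidiagonal.mem_antidiagonal, Set.mem_setOf_eq]
    tauto
  have hRc : ∀ n, N ≤ n → (R n).card = c := by
    intro n hn
    have := h n hn
    rwa [hset, Set.ncard_coe_finset] at this
  -- numerical setup
  set C0 : ℕ := ∑ n ∈ Finset.range N, (R n).card with hC0def
  set K : ℕ := 2 * C0 + 2 * c + 1 with hKdef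
  have hKpos : 0 < K := by omega
  obtain ⟨F, hFA, hFcard⟩ := hA.exists_subset_card_eq K
  set M : ℕ := F.sup id with hMdef
  have hFM : ∀ a ∈ F, a ≤ M := fun a ha => Finset.le_sup (f := id) ha
  set ε : ℝ := ((4 * K * (M + 1) : ℕ) : ℝ)⁻¹ with hεdef
  have hden : (0:ℝ) < ((4 * K * (M + 1) : ℕ) : ℝ) := by
    have h1 : 0 < 4 * K * (M + 1) := mul_pos (mul_pos four_pos hKpos) (Nat.succ_pos M)
    exact_mod_cast h1
  have hε0 : 0 < ε := inv_pos.2 hden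
  have hε1 : ε ≤ 1 / 2 := by
    have h2 : (2:ℝ) ≤ ((4 * K * (M + 1) : ℕ) : ℝ) := by
      have h3 : 2 ≤ 4 * K * (M + 1) := by nlinarith [hKpos]
      exact_mod_cast h3
    calc ε ≤ (2:ℝ)⁻¹ := inv_anti₀ two_pos h2
    _ = 1 / 2 := by norm_num
  set t : ℝ := 1 - ε with htdef
  have ht0 : 0 < t := by rw [htdef]; linarith
  have ht0' : (0:ℝ) ≤ t := le_of_lt ht0
  have ht1 : t < 1 := by rw [htdef]; linarith
  have ht1' : t ≤ 1 := le_of_lt ht1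
  set x : ℝ := -t with hxdef
  have hxnorm : ‖x‖ < 1 := by rw [hxdef, norm_neg, Real.norm_of_nonneg ht0']; exact ht1
  have hxabs : ∀ n : ℕ, |x ^ n| = t ^ n := by
    intro n
    rw [abs_pow, hxdef, abs_neg, abs_of_nonneg ht0']
  have hxle : ∀ n : ℕ, x ^ n ≤ t ^ n := fun n => le_of_abs_le (le_of_eq (hxabs n))
  have htpow1 : ∀ n : ℕ, t ^ n ≤ 1 := fun n => pow_le_one₀ ht0' ht1'
  have hgeo : Summable (fun n : ℕ => t ^ n) := summable_geometric_of_lt_one ht0' ht1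
  -- the indicator series
  set g : ℕ → ℝ := fun n => if n ∈ A then x ^ n else 0 with hgdef
  have hgnorm : Summable (fun n => ‖g n‖) := by
    apply Summable.of_nonneg_of_le (fun n => norm_nonneg _) _ hgeo
    intro n
    rw [hgdef]
    dsimp only
    split_ifs with hn
    · rw [Real.norm_eq_abs, hxabs]
    · simpa using pow_nonneg ht0' n
  -- Cauchy product
  set cf : ℕ → ℝ := fun n => ∑ kl ∈ antidiagonal n, g kl.1 * g kl.2 with hcfdef
  have hprod : (∑' n, g n) ^ 2 = ∑' n, cf n := by
    rw [sq]
    exact tsum_mul_tsum_eq_tsum_sum_antidiagonal_of_summable_norm hgnorm hgnorm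
  have hcfsum : Summable cf :=
    (summable_norm_sum_mul_antidiagonal_of_summable_norm hgnorm hgnorm).of_norm
  have hcf : ∀ n, cf n
      = (((antidiagonal n).filter (fun p => p.1 ∈ A ∧ p.2 ∈ A)).card : ℝ) * x ^ n := by
    intro n
    have hstep : cf n = ∑ kl ∈ antidiagonal n, (if kl.1 ∈ A ∧ kl.2 ∈ A then x ^ n else 0) := by
      apply Finset.sum_congr rfl
      intro kl hkl
      rw [Finset.HasAntidiagonal.mem_antidiagonal] at hkl
      rw [hgdef]
      by_cases h1 : kl.1 ∈ A <;> by_cases h2 : kl.2 ∈ A <;>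
        simp [h1, h2, ← pow_add, hkl]
    rw [hstep, ← Finset.sum_filter, Finset.sum_const, nsmul_eq_mul]
  -- diagonal series
  set d : ℕ → ℝ := fun n => if n % 2 = 0 ∧ n / 2 ∈ A then x ^ n else 0 with hddef
  have hd0 : ∀ n, 0 ≤ d n := by
    intro n
    rw [hddef]
    dsimp only
    split_ifs with hn
    · have hev : Even n := Nat.even_iff.2 hn.1
      rw [hxdef, hev.neg_pow]
      exact pow_nonneg ht0' n
    · exact le_refl 0
  have hdsum : Summable d := by
    apply Summable.of_nonneg_of_le hd0 _ hgeo
    intro n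
    rw [hddef]
    dsimp only
    split_ifs
    · exact hxle n
    · exact pow_nonneg ht0' n
  -- key identity
  have hkey : ∀ n, cf n + d n = 2 * ((R n).card : ℝ) * x ^ n := by
    intro n
    have hsplit := card_antidiag_split A n
    have hd' : d n = ((if n % 2 = 0 ∧ n / 2 ∈ A then 1 else 0 : ℕ) : ℝ) * x ^ n := by
      rw [hddef]; dsimp only; split_ifs <;> simp
    have hcast : (((antidiagonal n).filter (fun p => p.1 ∈ A ∧ p.2 ∈ A)).card : ℝ)
        + ((if n % 2 = 0 ∧ n / 2 ∈ A then 1 else 0 : ℕ) : ℝ) = 2 * ((R n).card : ℝ) := by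
      simp only [hRdef]
      exact_mod_cast hsplit
    rw [hcf n, hd', ← add_mul, hcast]
  have hrsum : Summable (fun n => ((R n).card : ℝ) * x ^ n) := by
    have heq : (fun n => ((R n).card : ℝ) * x ^ n) = fun n => (cf n + d n) / 2 := by
      funext n; rw [hkey n]; ring
    rw [heq]
    exact (hcfsum.add hdsum).div_const 2
  have hsum_eq : ∑' n, cf n + ∑' n, d n = 2 * ∑' n, ((R n).card : ℝ) * x ^ n := by
    rw [← Summable.tsum_add hcfsum hdsum, ← tsum_mul_left]
    exact tsum_congr fun n => by rw [hkey n, mul_assoc]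
  have hcf0 : 0 ≤ ∑' n, cf n := hprod ▸ sq_nonneg (∑' n, g n)
  have hd_le : ∑' n, d n ≤ 2 * ∑' n, ((R n).card : ℝ) * x ^ n := by linarith
  -- upper bound for the representation series
  set u : ℕ → ℝ := fun n => if n < N then ((R n).card : ℝ) * x ^ n else 0 with hudef
  set w : ℕ → ℝ := fun n => if N ≤ n then (c : ℝ) * x ^ n else 0 with hwdef
  have huw : (fun n => ((R n).card : ℝ) * x ^ n) = fun n => u n + w n := by
    funext n
    rw [hudef, hwdef]
    dsimp only
    by_cases hn : n < N
    · rw [if_pos hn, if_neg (by omega), add_zero]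
    · have hn' : N ≤ n := Nat.le_of_not_lt hn
      rw [if_neg hn, if_pos hn', zero_add, hRc n hn']
  have huvan : ∀ n ∉ Finset.range N, u n = 0 := by
    intro n hn
    rw [Finset.mem_range] at hn
    rw [hudef]
    dsimp only
    rw [if_neg hn]
  have husum : Summable u := summable_of_ne_finset_zero huvan
  have hu_le : ∑' n, u n ≤ (C0 : ℝ) := by
    rw [tsum_eq_sum huvan]
    have hc0 : (C0 : ℝ) = ∑ n ∈ Finset.range N, ((R n).card : ℝ) := by
      rw [hC0def]; push_cast; rfl
    rw [hc0]
    apply Finset.sum_le_sum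
    intro i hi
    rw [Finset.mem_range] at hi
    rw [hudef]
    dsimp only
    rw [if_pos hi]
    exact mul_le_of_le_one_right (Nat.cast_nonneg _) ((hxle i).trans (htpow1 i))
  have hwsum : Summable w := by
    apply Summable.of_norm
    apply Summable.of_nonneg_of_le (fun n => norm_nonneg _) _ (hgeo.mul_left (c : ℝ))
    intro n
    rw [hwdef]
    dsimp only
    split_ifs
    · rw [norm_mul, Real.norm_eq_abs, Real.norm_eq_abs, hxabs,
        abs_of_nonneg (Nat.cast_nonneg c)]
    · simpa using mul_nonneg (Nat.cast_nonneg c) (pow_nonneg ht0' n)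
  have hwts : ∑' n, w n = (c : ℝ) * x ^ N * (1 - x)⁻¹ := by
    have hinj : Function.Injective (fun k : ℕ => N + k) := fun a b hab => Nat.add_left_cancel hab
    have hsupp : Function.support w ⊆ Set.range (fun k : ℕ => N + k) := by
      intro n hn
      rw [Function.mem_support] at hn
      have hNn : N ≤ n := by
        by_contra hh
        apply hn
        rw [hwdef]
        dsimp only
        rw [if_neg hh]
      exact ⟨n - N, by show N + (n - N) = n; omega⟩
    rw [← hinj.tsum_eq hsupp]
    have hwk : ∀ k, w (N + k) = (c : ℝ) * x ^ N * x ^ k := by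
      intro k
      rw [hwdef]
      dsimp only
      rw [if_pos (Nat.le_add_right N k), pow_add, mul_assoc]
    rw [tsum_congr hwk, tsum_mul_left, tsum_geometric_of_norm_lt_one hxnorm]
  have hw_le : ∑' n, w n ≤ (c : ℝ) := by
    rw [hwts]
    have h1 : |x ^ N| ≤ 1 := by rw [hxabs]; exact htpow1 N
    have h1' : x ^ N ≤ 1 := le_of_abs_le h1
    have h1'' : -1 ≤ x ^ N := neg_le_of_abs_le h1
    have h2 : (0:ℝ) < 1 - x := by rw [hxdef]; linarith
    have h3 : (1 - x)⁻¹ ≤ 1 := by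
      apply inv_le_one_of_one_le₀
      rw [hxdef]; linarith
    have h4 : (0:ℝ) ≤ (1 - x)⁻¹ := le_of_lt (inv_pos.2 h2)
    have h5 : x ^ N * (1 - x)⁻¹ ≤ 1 := by nlinarith
    calc (c : ℝ) * x ^ N * (1 - x)⁻¹ = (c : ℝ) * (x ^ N * (1 - x)⁻¹) := mul_assoc _ _ _
    _ ≤ (c : ℝ) * 1 := mul_le_mul_of_nonneg_left h5 (Nat.cast_nonneg c)
    _ = (c : ℝ) := mul_one _
  have hr_le : ∑' n, ((R n).card : ℝ) * x ^ n ≤ (C0 : ℝ) + c := by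
    rw [huw, Summable.tsum_add husum hwsum]
    linarith
  -- lower bound via the diagonal
  have hFd : ∀ a ∈ F, d (2 * a) = t ^ (2 * a) := by
    intro a ha
    have haA : a ∈ A := hFA ha
    have hdiv : (2 * a) / 2 = a := by omega
    rw [hddef]
    dsimp only
    rw [if_pos ⟨by omega, by rw [hdiv]; exact haA⟩, hxdef, (even_two_mul a).neg_pow]
  have hlow1 : ∑ a ∈ F, t ^ (2 * a) ≤ ∑' n, d n := by
    have himg : ∑ a ∈ F, t ^ (2 * a) = ∑ m ∈ F.image (fun a => 2 * a), d m := by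
      rw [Finset.sum_image (by intro a _ b _ hab; dsimp only at hab; omega)]
      exact Finset.sum_congr rfl fun a ha => (hFd a ha).symm
    rw [himg]
    exact Summable.sum_le_tsum _ (fun n _ => hd0 n) hdsum
  have hlow2 : (K : ℝ) * t ^ (2 * M) ≤ ∑ a ∈ F, t ^ (2 * a) := by
    have hterm : ∀ a ∈ F, t ^ (2 * M) ≤ t ^ (2 * a) := by
      intro a ha
      exact pow_le_pow_of_le_one ht0' ht1' (by have := hFM a ha; omega)
    calc (K : ℝ) * t ^ (2 * M) = (F.card : ℝ) * t ^ (2 * M) := by rw [hFcard]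
    _ = ∑ _a ∈ F, t ^ (2 * M) := by rw [Finset.sum_const, nsmul_eq_mul]
    _ ≤ ∑ a ∈ F, t ^ (2 * a) := Finset.sum_le_sum hterm
  -- Bernoulli lower bound for t ^ (2M)
  have hbern : 1 - ((2 * M : ℕ) : ℝ) * ε ≤ t ^ (2 * M) := by
    have hb := one_add_mul_le_pow (a := -ε) (by linarith) (2 * M)
    calc 1 - ((2 * M : ℕ) : ℝ) * ε = 1 + ((2 * M : ℕ) : ℝ) * (-ε) := by ring
    _ ≤ (1 + -ε) ^ (2 * M) := hb
    _ = t ^ (2 * M) := by rw [htdef]; ring_nf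
  have hεM : (K : ℝ) * (((2 * M : ℕ) : ℝ) * ε) ≤ 1 / 2 := by
    have hle : ((4 * K * M : ℕ) : ℝ) ≤ ((4 * K * (M + 1) : ℕ) : ℝ) := by
      exact_mod_cast Nat.mul_le_mul_left (4 * K) (by omega)
    have hcalc : 2 * ((K : ℝ) * (((2 * M : ℕ) : ℝ) * ε))
        = ((4 * K * M : ℕ) : ℝ) * ((4 * K * (M + 1) : ℕ) : ℝ)⁻¹ := by
      rw [hεdef]; push_cast; ring
    have hfin : ((4 * K * M : ℕ) : ℝ) * ((4 * K * (M + 1) : ℕ) : ℝ)⁻¹ ≤ 1 := by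
      calc ((4 * K * M : ℕ) : ℝ) * ((4 * K * (M + 1) : ℕ) : ℝ)⁻¹
          ≤ ((4 * K * (M + 1) : ℕ) : ℝ) * ((4 * K * (M + 1) : ℕ) : ℝ)⁻¹ :=
            mul_le_mul_of_nonneg_right hle (inv_nonneg.2 hden.le)
      _ = 1 := mul_inv_cancel₀ (ne_of_gt hden)
    linarith [hcalc ▸ hfin]
  -- put everything together
  have hK0 : (0:ℝ) ≤ (K : ℝ) := Nat.cast_nonneg K
  have hchain : (K : ℝ) - 1 / 2 ≤ 2 * ((C0 : ℝ) + c) := by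
    have h6 : (K : ℝ) * (1 - ((2 * M : ℕ) : ℝ) * ε) ≤ (K : ℝ) * t ^ (2 * M) :=
      mul_le_mul_of_nonneg_left hbern hK0
    have h7 : (K : ℝ) - 1 / 2 ≤ (K : ℝ) * (1 - ((2 * M : ℕ) : ℝ) * ε) := by
      have : (K : ℝ) * (1 - ((2 * M : ℕ) : ℝ) * ε)
          = (K : ℝ) - (K : ℝ) * (((2 * M : ℕ) : ℝ) * ε) := by ring
      rw [this]
      linarith
    linarith [hlow1, hlow2, hd_le, hr_le]
  have hKval : (K : ℝ) = 2 * (C0 : ℝ) + 2 * (c : ℝ) + 1 := by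
    rw [hKdef]; push_cast; ring
  rw [hKval] at hchain
  linarith
end

section
/- Let f ∈ ℂ[[x^Λ]] with f(0) ≠ 0, and define the logarithmic derivative x f'/f using the formal derivative x f' = Σ λ c_λ x^λ. Then f lies in the subring ℂ[[x]] of ordinary power series if and only if x f'/f lies in ℂ[[x]]. -/
noncomputable section

/-- The lattice Λ associated to `(b; θ₁,…,θₘ)`. -/
def lattice {m : ℕ} (b : ℕ) (θ : Fin m → ℝ) : Set ℝ :=
  {x | ∃ F : MvPolynomial (Fin m) ℕ,
    x = (b : ℝ)⁻¹ * MvPolynomial.eval₂ (Nat.castRingHom ℝ) θ F}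

/-- Multiplication (convolution) of fractional power series, encoded by their
coefficient functions `ℝ → ℂ`. -/
def fmul (f g : ℝ → ℂ) : ℝ → ℂ := fun lam => ∑ᶠ mu : ℝ, f mu * g (lam - mu)

/-- The unit element `1 = x⁰`. -/
def fone : ℝ → ℂ := fun lam => if lam = 0 then 1 else 0

/-- The derivative operator `f ↦ x f'`, termwise `Σ c_λ x^λ ↦ Σ λ c_λ x^λ`. -/
def fderiv' (f : ℝ → ℂ) : ℝ → ℂ := fun lam => (lam : ℂ) * f lam

/-- A coefficient function lies in the subring `ℂ[[x]]` iff its support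
consists of nonnegative integers. -/
def isPowerSeries (f : ℝ → ℂ) : Prop :=
  Function.support f ⊆ Set.range (Nat.cast : ℕ → ℝ)

lemma lat_nonneg {m : ℕ} {b : ℕ} {θ : Fin m → ℝ} (hθ : ∀ i, 1 < θ i)
    {x : ℝ} (hx : x ∈ lattice b θ) : 0 ≤ x := by
  obtain ⟨F, rfl⟩ := hx
  have : 0 ≤ MvPolynomial.eval₂ (Nat.castRingHom ℝ) θ F := by
    rw [MvPolynomial.eval₂_eq]
    apply Finset.sum_nonneg
    intro d _
    apply mul_nonneg (by simp only [Nat.coe_castRingHom]; exact Nat.cast_nonneg _)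
    apply Finset.prod_nonneg
    intro i _
    exact pow_nonneg (le_of_lt (lt_trans one_pos (hθ i))) _
  positivity

lemma lat_zero {m : ℕ} (b : ℕ) (θ : Fin m → ℝ) : (0:ℝ) ∈ lattice b θ :=
  ⟨0, by simp⟩

lemma lat_add {m : ℕ} {b : ℕ} {θ : Fin m → ℝ} {x y : ℝ}
    (hx : x ∈ lattice b θ) (hy : y ∈ lattice b θ) : x + y ∈ lattice b θ := by
  obtain ⟨F, rfl⟩ := hx; obtain ⟨G, rfl⟩ := hy
  exact ⟨F + G, by rw [MvPolynomial.eval₂_add]; ring⟩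

lemma lat_finite {m : ℕ} {b : ℕ} {θ : Fin m → ℝ} (hb : 0 < b) (hθ : ∀ i, 1 < θ i)
    (c : ℝ) : (lattice b θ ∩ Set.Iic c).Finite := by
  classical
  set B : ℝ := (b : ℝ) * c with hB
  choose k hk using fun i => pow_unbounded_of_one_lt B (hθ i)
  set K : ℕ := Finset.univ.sup k with hK
  set N : ℕ := ⌈B⌉₊ with hN
  set toD : (Fin m → Fin K) → (Fin m →₀ ℕ) :=
    fun α => Finsupp.equivFunOnFinite.symm (fun i => (α i : ℕ)) with htoD
  set φ : ((Fin m → Fin K) → Fin (N + 1)) → ℝ :=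
    fun cf => (b : ℝ)⁻¹ * ∑ α : Fin m → Fin K, ((cf α : ℕ) : ℝ) * ∏ i, θ i ^ (α i : ℕ)
    with hφ
  apply Set.Finite.subset (Set.finite_range φ)
  rintro x ⟨⟨F, rfl⟩, hxc⟩
  set E : ℝ := MvPolynomial.eval₂ (Nat.castRingHom ℝ) θ F with hE
  have hbR : (0:ℝ) < b := by exact_mod_cast hb
  have hEB : E ≤ B := by
    have : (b:ℝ)⁻¹ * E ≤ c := hxc
    rw [hB]
    calc E = (b:ℝ) * ((b:ℝ)⁻¹ * E) := by field_simp
    _ ≤ (b:ℝ) * c := by apply mul_le_mul_of_nonneg_left this hbR.le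
  have hEeq : E = ∑ d ∈ F.support, ((F.coeff d : ℕ) : ℝ) * ∏ i, θ i ^ d i := by
    rw [hE, MvPolynomial.eval₂_eq']; simp [Nat.coe_castRingHom]
  have hprod1' : ∀ (d : Fin m →₀ ℕ) (s : Finset (Fin m)), (1:ℝ) ≤ ∏ i ∈ s, θ i ^ d i := by
    intro d s
    have := Finset.prod_le_prod (s := s) (f := fun _ => (1:ℝ)) (g := fun i => θ i ^ d i)
      (fun i _ => zero_le_one)
      (fun i _ => one_le_pow₀ (hθ i).le)
    simpa using this
  have hprod1 : ∀ d : Fin m →₀ ℕ, (1:ℝ) ≤ ∏ i, θ i ^ d i := fun d => hprod1' d Finset.univ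
  have hterm : ∀ d ∈ F.support, ((F.coeff d : ℕ) : ℝ) * ∏ i, θ i ^ d i ≤ E := by
    intro d hd
    rw [hEeq]
    apply Finset.single_le_sum (fun d' _ => ?_) hd
    exact mul_nonneg (Nat.cast_nonneg _) (le_trans zero_le_one (hprod1 d'))
  have hcoeff : ∀ d : Fin m →₀ ℕ, F.coeff d ≤ N := by
    intro d
    by_cases hd : d ∈ F.support
    · have h1 : ((F.coeff d : ℕ) : ℝ) ≤ E := by
        calc ((F.coeff d : ℕ) : ℝ) = ((F.coeff d : ℕ) : ℝ) * 1 := by ring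
        _ ≤ ((F.coeff d : ℕ) : ℝ) * ∏ i, θ i ^ d i :=
            mul_le_mul_of_nonneg_left (hprod1 d) (Nat.cast_nonneg _)
        _ ≤ E := hterm d hd
      have : ((F.coeff d : ℕ) : ℝ) ≤ (N : ℝ) := le_trans h1 (le_trans hEB (Nat.le_ceil B))
      exact_mod_cast this
    · simp [MvPolynomial.notMem_support_iff.mp hd]
  have hdK : ∀ d ∈ F.support, ∀ i, d i < K := by
    intro d hd i
    have hco1 : (1:ℝ) ≤ ((F.coeff d : ℕ) : ℝ) := by
      have := MvPolynomial.mem_support_iff.mp hd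
      exact_mod_cast Nat.one_le_iff_ne_zero.mpr this
    have h1 : θ i ^ (d i) ≤ ∏ j, θ j ^ d j := by
      rw [← Finset.mul_prod_erase Finset.univ _ (Finset.mem_univ i)]
      nth_rewrite 1 [← mul_one (θ i ^ (d i))]
      exact mul_le_mul_of_nonneg_left (hprod1' d _) (pow_nonneg (lt_trans one_pos (hθ i)).le _)
    have h2 : θ i ^ (d i) ≤ E := by
      calc θ i ^ (d i) ≤ ∏ j, θ j ^ d j := h1
      _ = 1 * ∏ j, θ j ^ d j := by ring
      _ ≤ ((F.coeff d : ℕ) : ℝ) * ∏ j, θ j ^ d j :=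
          mul_le_mul_of_nonneg_right hco1 (le_trans zero_le_one (hprod1 d))
      _ ≤ E := hterm d hd
    have h3 : θ i ^ (d i) < θ i ^ (k i) := lt_of_le_of_lt (le_trans h2 hEB) (hk i)
    have h4 : d i < k i := (pow_lt_pow_iff_right₀ (hθ i)).mp h3
    exact lt_of_lt_of_le h4 (Finset.le_sup (Finset.mem_univ i))
  refine ⟨fun α => ⟨F.coeff (toD α), Nat.lt_succ_of_le (hcoeff _)⟩, ?_⟩
  simp only [hφ, Fin.val_mk]
  congr 1
  have hinj : Function.Injective toD := by
    intro α β hab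
    funext i
    have := congrArg (fun d : Fin m →₀ ℕ => d i) hab
    simpa [htoD, Fin.val_injective.eq_iff] using this
  have hsum : ∑ α : Fin m → Fin K, ((F.coeff (toD α) : ℕ) : ℝ) * ∏ i, θ i ^ (α i : ℕ)
      = ∑ d ∈ Finset.univ.image toD, ((F.coeff d : ℕ) : ℝ) * ∏ i, θ i ^ d i := by
    rw [Finset.sum_image (fun a _ b _ h => hinj h)]
    apply Finset.sum_congr rfl
    intro α _
    congr 1
  rw [hsum, hEeq]
  symm
  apply Finset.sum_subset
  · intro d hd
    simp only [Finset.mem_image, Finset.mem_univ, true_and]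
    refine ⟨fun i => ⟨d i, hdK d hd i⟩, ?_⟩
    ext j
    simp [htoD]
  · intro d _ hd
    simp [MvPolynomial.notMem_support_iff.mp hd]

section conv
variable {m : ℕ} {b : ℕ} {θ : Fin m → ℝ}

lemma conv_support (hθ : ∀ i, 1 < θ i) {u v : ℝ → ℂ}
    (hu : Function.support u ⊆ lattice b θ) (hv : Function.support v ⊆ lattice b θ)
    (lam : ℝ) :
    Function.support (fun mu => u mu * v (lam - mu)) ⊆ lattice b θ ∩ Set.Iic lam := by
  intro mu hmu
  have h1 : u mu ≠ 0 := fun h => hmu (by simp [h])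
  have h2 : v (lam - mu) ≠ 0 := fun h => hmu (by simp [h])
  have hmuL : mu ∈ lattice b θ := hu h1
  have hL2 : lam - mu ∈ lattice b θ := hv h2
  exact ⟨hmuL, by have := lat_nonneg hθ hL2; simp only [Set.mem_Iic]; linarith⟩

lemma fmul_eq_sum (hθ : ∀ i, 1 < θ i) {u v : ℝ → ℂ}
    (hu : Function.support u ⊆ lattice b θ) (hv : Function.support v ⊆ lattice b θ)
    (lam : ℝ) (S : Finset ℝ) (hS : lattice b θ ∩ Set.Iic lam ⊆ ↑S) :
    fmul u v lam = ∑ mu ∈ S, u mu * v (lam - mu) :=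
  finsum_eq_sum_of_support_subset _ (subset_trans (conv_support hθ hu hv lam) hS)

lemma fmul_ne_zero {u v : ℝ → ℂ} {lam : ℝ} (h : fmul u v lam ≠ 0) :
    ∃ mu, u mu ≠ 0 ∧ v (lam - mu) ≠ 0 := by
  by_contra hc
  push_neg at hc
  apply h
  have : ∀ mu, u mu * v (lam - mu) = 0 := by
    intro mu
    rcases eq_or_ne (u mu) 0 with h1 | h1
    · simp [h1]
    · simp [hc mu h1]
  simp [fmul, this]

lemma supp_fmul {u v : ℝ → ℂ}
    (hu : Function.support u ⊆ lattice b θ) (hv : Function.support v ⊆ lattice b θ) :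
    Function.support (fmul u v) ⊆ lattice b θ := by
  intro lam hlam
  obtain ⟨mu, h1, h2⟩ := fmul_ne_zero hlam
  have := lat_add (hu h1) (hv h2)
  simpa using this

lemma fmul_fone {u : ℝ → ℂ} : fmul u fone = u := by
  funext lam
  have : ∀ mu, mu ≠ lam → u mu * fone (lam - mu) = 0 := by
    intro mu hmu
    have : lam - mu ≠ 0 := fun h => hmu (by linarith [sub_eq_zero.mp h])
    simp [fone, this]
  rw [fmul, finsum_eq_single _ lam this]
  simp [fone]

lemma fmul_comm (hb : 0 < b) (hθ : ∀ i, 1 < θ i) {u v : ℝ → ℂ}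
    (hu : Function.support u ⊆ lattice b θ) (hv : Function.support v ⊆ lattice b θ) :
    fmul u v = fmul v u := by
  classical
  funext lam
  set S : Finset ℝ := (lat_finite hb hθ lam).toFinset with hS
  have hSsub : lattice b θ ∩ Set.Iic lam ⊆ ↑S := by
    intro x hx; simpa [hS] using hx
  set T : Finset ℝ := S ∪ S.image (fun x => lam - x) with hT
  have hTsub : lattice b θ ∩ Set.Iic lam ⊆ ↑T := by
    intro x hx
    simp only [hT, Finset.coe_union, Set.mem_union]
    exact Or.inl (hSsub hx)
  rw [fmul_eq_sum hθ hu hv lam T hTsub, fmul_eq_sum hθ hv hu lam T hTsub]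
  apply Finset.sum_nbij' (fun mu => lam - mu) (fun mu => lam - mu)
  · intro a ha
    simp only [hT, Finset.mem_union, Finset.mem_image] at ha ⊢
    rcases ha with ha | ⟨x, hx, rfl⟩
    · exact Or.inr ⟨a, ha, rfl⟩
    · exact Or.inl (by simpa using hx)
  · intro a ha
    simp only [hT, Finset.mem_union, Finset.mem_image] at ha ⊢
    rcases ha with ha | ⟨x, hx, rfl⟩
    · exact Or.inr ⟨a, ha, rfl⟩
    · exact Or.inl (by simpa using hx)
  · intro a _; ring
  · intro a _; ring
  · intro a _; simp only [sub_sub_cancel]; ring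

lemma fmul_assoc (hb : 0 < b) (hθ : ∀ i, 1 < θ i) {u v w : ℝ → ℂ}
    (hu : Function.support u ⊆ lattice b θ) (hv : Function.support v ⊆ lattice b θ)
    (hw : Function.support w ⊆ lattice b θ) :
    fmul (fmul u v) w = fmul u (fmul v w) := by
  classical
  funext lam
  set S : Finset ℝ := (lat_finite hb hθ lam).toFinset with hS
  have hSsub : lattice b θ ∩ Set.Iic lam ⊆ ↑S := by
    intro x hx; simpa [hS] using hx
  have hSmem : ∀ x ∈ S, x ∈ lattice b θ ∧ x ≤ lam := by
    intro x hx
    have : x ∈ lattice b θ ∩ Set.Iic lam := by simpa [hS] using hx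
    exact ⟨this.1, this.2⟩
  have hL : fmul (fmul u v) w lam
      = ∑ mu ∈ S, ∑ nu ∈ S, u nu * (v (mu - nu) * w (lam - mu)) := by
    rw [fmul_eq_sum hθ (supp_fmul hu hv) hw lam S hSsub]
    apply Finset.sum_congr rfl
    intro mu hmu
    have hmulam : mu ≤ lam := (hSmem mu hmu).2
    rw [fmul_eq_sum hθ hu hv mu S
      (fun x hx => hSsub ⟨hx.1, le_trans hx.2 hmulam⟩), Finset.sum_mul]
    apply Finset.sum_congr rfl
    intro nu _
    ring
  have hR : fmul u (fmul v w) lam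
      = ∑ nu ∈ S, ∑ mu' ∈ S, u nu * (v mu' * w (lam - nu - mu')) := by
    rw [fmul_eq_sum hθ hu (supp_fmul hv hw) lam S hSsub]
    apply Finset.sum_congr rfl
    intro nu hnu
    rw [fmul_eq_sum hθ hv hw (lam - nu) S
      (fun x hx => hSsub ⟨hx.1, by
        have h0 : 0 ≤ nu := lat_nonneg hθ (hSmem nu hnu).1
        have := hx.2
        simp only [Set.mem_Iic] at this ⊢
        linarith⟩), Finset.mul_sum]
  rw [hL, hR, Finset.sum_comm]
  apply Finset.sum_congr rfl
  intro nu hnu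
  have hnuL := hSmem nu hnu
  have hnu0 : 0 ≤ nu := lat_nonneg hθ hnuL.1
  rw [← Finset.sum_filter_ne_zero S
    (f := fun mu => u nu * (v (mu - nu) * w (lam - mu))),
    ← Finset.sum_filter_ne_zero S
    (f := fun mu' => u nu * (v mu' * w (lam - nu - mu')))]
  apply Finset.sum_nbij' (fun mu => mu - nu) (fun mu' => mu' + nu)
  · intro mu hmu
    simp only [Finset.mem_filter] at hmu ⊢
    obtain ⟨hmuS, hne⟩ := hmu
    have h2 : v (mu - nu) ≠ 0 := fun h => hne (by simp [h])
    have hmuL := hSmem mu hmuS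
    refine ⟨hSsub ⟨hv h2, ?_⟩, ?_⟩
    · simp only [Set.mem_Iic]; linarith [hmuL.2]
    · have e : lam - nu - (mu - nu) = lam - mu := by ring
      simp only [e]
      exact hne
  · intro mu' hmu'
    simp only [Finset.mem_filter] at hmu' ⊢
    obtain ⟨hmu'S, hne⟩ := hmu'
    have h2 : v mu' ≠ 0 := fun h => hne (by simp [h])
    have h3 : w (lam - nu - mu') ≠ 0 := fun h => hne (by simp [h])
    have hmu'L := hSmem mu' hmu'S
    refine ⟨hSsub ⟨lat_add hmu'L.1 hnuL.1, ?_⟩, ?_⟩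
    · have := lat_nonneg hθ (hw h3)
      simp only [Set.mem_Iic]
      linarith
    · have e1 : mu' + nu - nu = mu' := by ring
      have e2 : lam - (mu' + nu) = lam - nu - mu' := by ring
      simp only [e1, e2]
      exact hne
  · intro mu _; ring
  · intro mu' _; ring
  · intro mu _
    have e : lam - nu - (mu - nu) = lam - mu := by ring
    simp only [e]
end conv

section main
variable {m : ℕ} {b : ℕ} {θ : Fin m → ℝ}

lemma lat_min (hb : 0 < b) (hθ : ∀ i, 1 < θ i) {A : Set ℝ}
    (hA : A ⊆ lattice b θ) (hne : A.Nonempty) :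
    ∃ a ∈ A, ∀ x ∈ A, a ≤ x := by
  classical
  obtain ⟨c, hc⟩ := hne
  have hfin : (A ∩ Set.Iic c).Finite :=
    (lat_finite hb hθ c).subset (fun x hx => ⟨hA hx.1, hx.2⟩)
  have hne' : hfin.toFinset.Nonempty :=
    ⟨c, by simp [Set.Finite.mem_toFinset]; exact hc⟩
  set a := hfin.toFinset.min' hne' with ha
  have haA : a ∈ A ∩ Set.Iic c := by
    have := hfin.toFinset.min'_mem hne'
    simpa [Set.Finite.mem_toFinset] using this
  refine ⟨a, haA.1, fun x hx => ?_⟩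
  rcases le_or_gt x c with h | h
  · exact hfin.toFinset.min'_le x (by simp [Set.Finite.mem_toFinset]; exact ⟨hx, h⟩)
  · exact le_trans haA.2 h.le

lemma inv_isPS (hb : 0 < b) (hθ : ∀ i, 1 < θ i) {f g : ℝ → ℂ}
    (hf : Function.support f ⊆ lattice b θ) (hf0 : f 0 ≠ 0)
    (hg : Function.support g ⊆ lattice b θ)
    (hfg : fmul f g = fone) (hPf : isPowerSeries f) : isPowerSeries g := by
  by_contra hPg
  rw [isPowerSeries, Set.not_subset] at hPg
  obtain ⟨l, hl, hlr⟩ := hPg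
  set A : Set ℝ := Function.support g \ Set.range (Nat.cast : ℕ → ℝ) with hA
  obtain ⟨l0, hl0A, hl0min⟩ := lat_min hb hθ (A := A) (fun x hx => hg hx.1) ⟨l, hl, hlr⟩
  have hl0r : l0 ∉ Set.range (Nat.cast : ℕ → ℝ) := hl0A.2
  have hl00 : l0 ≠ 0 := fun h => hl0r ⟨0, by simp [h]⟩
  have hterm : ∀ mu, mu ≠ 0 → f mu * g (l0 - mu) = 0 := by
    intro mu hmu
    by_contra hne
    have h1 : f mu ≠ 0 := fun h => hne (by simp [h])
    have h2 : g (l0 - mu) ≠ 0 := fun h => hne (by simp [h])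
    obtain ⟨n, rfl⟩ := hPf h1
    have hn0 : 0 < (n : ℝ) := by
      rcases Nat.eq_zero_or_pos n with h | h
      · exact absurd (by simp [h]) hmu
      · exact_mod_cast h
    have hr : l0 - (n:ℝ) ∉ Set.range (Nat.cast : ℕ → ℝ) := by
      rintro ⟨k, hk⟩
      exact hl0r ⟨k + n, by push_cast; linarith⟩
    have : l0 ≤ l0 - (n:ℝ) := hl0min _ ⟨h2, hr⟩
    linarith
  have hval : fmul f g l0 = f 0 * g l0 := by
    rw [fmul, finsum_eq_single _ 0 hterm]
    simp
  rw [hfg] at hval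
  have : fone l0 = 0 := by simp [fone, hl00]
  rw [this] at hval
  exact hl0A.1 (by
    rcases mul_eq_zero.mp hval.symm with h | h
    · exact absurd h hf0
    · exact h)

theorem powerSeries_iff_logDeriv' (hb : 0 < b) (hθ : ∀ i, 1 < θ i) (f g : ℝ → ℂ)
    (hf : Function.support f ⊆ lattice b θ) (hf0 : f 0 ≠ 0)
    (hg : Function.support g ⊆ lattice b θ)
    (hfg : fmul f g = fone) :
    isPowerSeries f ↔ isPowerSeries (fmul (fderiv' f) g) := by
  set δ : ℝ → ℂ := fderiv' f with hδ
  have hsuppδ : Function.support δ ⊆ Function.support f := by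
    intro x hx
    simp only [hδ, fderiv', Function.mem_support] at hx ⊢
    exact fun h => hx (by simp [h])
  have hδL : Function.support δ ⊆ lattice b θ := subset_trans hsuppδ hf
  constructor
  · intro hPf
    have hPg : isPowerSeries g := inv_isPS hb hθ hf hf0 hg hfg hPf
    intro lam hlam
    obtain ⟨mu, h1, h2⟩ := fmul_ne_zero hlam
    obtain ⟨n, rfl⟩ := hPf (hsuppδ h1)
    obtain ⟨k, hk⟩ := hPg h2
    exact ⟨n + k, by push_cast; linarith⟩
  · intro hPh
    set h : ℝ → ℂ := fmul δ g with hh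
    have hkey : fmul h f = δ := by
      rw [hh, fmul_assoc hb hθ hδL hg hf, fmul_comm hb hθ hg hf, hfg, fmul_fone]
    have hh0 : h 0 = 0 := by
      rw [hh, fmul]
      apply finsum_eq_zero_of_forall_eq_zero
      intro mu
      by_contra hne
      have h1 : δ mu ≠ 0 := fun hz => hne (by simp [hz])
      have h2 : g (0 - mu) ≠ 0 := fun hz => hne (by rw [hz, mul_zero])
      have hmu0 : mu ≠ 0 := by
        intro hz
        apply h1
        simp [hδ, fderiv', hz]
      have hmupos : 0 < mu := lt_of_le_of_ne (lat_nonneg hθ (hδL h1)) (Ne.symm hmu0)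
      have : 0 ≤ 0 - mu := lat_nonneg hθ (hg h2)
      linarith
    by_contra hPf
    rw [isPowerSeries, Set.not_subset] at hPf
    obtain ⟨l, hl, hlr⟩ := hPf
    obtain ⟨l0, hl0A, hl0min⟩ := lat_min hb hθ
      (A := Function.support f \ Set.range (Nat.cast : ℕ → ℝ))
      (fun x hx => hf hx.1) ⟨l, hl, hlr⟩
    have hl0r : l0 ∉ Set.range (Nat.cast : ℕ → ℝ) := hl0A.2
    have hl00 : l0 ≠ 0 := fun hz => hl0r ⟨0, by simp [hz]⟩
    have hzero : fmul h f l0 = 0 := by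
      rw [fmul]
      apply finsum_eq_zero_of_forall_eq_zero
      intro mu
      by_contra hne
      have h1 : h mu ≠ 0 := fun hz => hne (by simp [hz])
      have h2 : f (l0 - mu) ≠ 0 := fun hz => hne (by simp [hz])
      obtain ⟨n, rfl⟩ := hPh h1
      have hn0 : n ≠ 0 := by
        rintro rfl
        exact h1 (by simpa using hh0)
      have hnpos : 0 < (n : ℝ) := by exact_mod_cast Nat.pos_of_ne_zero hn0
      have hr : l0 - (n:ℝ) ∉ Set.range (Nat.cast : ℕ → ℝ) := by
        rintro ⟨k, hk⟩
        exact hl0r ⟨k + n, by push_cast; linarith⟩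
      have : l0 ≤ l0 - (n:ℝ) := hl0min _ ⟨h2, hr⟩
      linarith
    rw [hkey] at hzero
    simp only [hδ, fderiv'] at hzero
    rcases mul_eq_zero.mp hzero with hz | hz
    · exact hl00 (by exact_mod_cast hz)
    · exact hl0A.1 hz
end main

/-- Let `f ∈ ℂ[[x^Λ]]` with `f(0) ≠ 0`, and let `g = f⁻¹` in `ℂ[[x^Λ]]`.
Then `f ∈ ℂ[[x]]` if and only if the logarithmic derivative
`x f'/f = (x f')·f⁻¹` lies in `ℂ[[x]]`. -/
theorem powerSeries_iff_logDeriv {m : ℕ} (b : ℕ) (hb : 0 < b)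
    (θ : Fin m → ℝ) (hθ : ∀ i, 1 < θ i) (f g : ℝ → ℂ)
    (hf : Function.support f ⊆ lattice b θ) (hf0 : f 0 ≠ 0)
    (hg : Function.support g ⊆ lattice b θ)
    (hfg : fmul f g = fone) :
    isPowerSeries f ↔ isPowerSeries (fmul (fderiv' f) g) := by
  exact powerSeries_iff_logDeriv' hb hθ f g hf hf0 hg hfg
end
end

section
/- For fractional power series f_n with ord(f_n) > 0 and ord(f_n) → ∞, the logarithmic derivative of the infinite product satisfies x·(∏_{n≥1}(1+f_n))' / ∏_{n≥1}(1+f_n) = Σ_{n≥1} x f_n' · (1+f_n)^{-1}. -/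
noncomputable section

/-- Partial products `∏_{n < N} (1 + f n)`. -/
def partialProd (f : ℕ → ℝ → ℂ) : ℕ → ℝ → ℂ
  | 0 => fone
  | N + 1 => fmul (partialProd f N) (fone + f N)

/-! ### Auxiliary theory -/

open Function Set

/-- A "good" support set: nonnegative, additively closed, containing `0`, and with
finite truncations.  The lattice `lattice b θ` is such a set. -/
structure GoodSet (L : Set ℝ) : Prop where
  zero_mem : (0:ℝ) ∈ L
  add_mem : ∀ ⦃a c : ℝ⦄, a ∈ L → c ∈ L → a + c ∈ L
  nonneg : ∀ ⦃a : ℝ⦄, a ∈ L → 0 ≤ a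
  fin : ∀ M : ℝ, (L ∩ Set.Iic M).Finite

namespace GoodSet

variable {L : Set ℝ} {f g h f' g' f₁ f₂ : ℝ → ℂ}

theorem fone_supp (hL : GoodSet L) : support fone ⊆ L := by
  intro x hx
  rcases eq_or_ne x 0 with h | h
  · rw [h]; exact hL.zero_mem
  · exact absurd (by simp [fone, h]) hx

theorem add_supp (hf : support f ⊆ L) (hg : support g ⊆ L) :
    support (f + g) ⊆ L :=
  (support_add f g).trans (Set.union_subset hf hg)

theorem fderiv'_supp (hf : support f ⊆ L) : support (fderiv' f) ⊆ L := fun x hx =>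
  hf (mem_support.2 fun h0 => (mem_support.1 hx) (by simp [fderiv', h0]))

theorem conv_supp (hL : GoodSet L) (hf : support f ⊆ L) (hg : support g ⊆ L) (lam : ℝ) :
    support (fun mu => f mu * g (lam - mu)) ⊆ L ∩ Set.Iic lam := by
  intro mu hmu
  simp only [mem_support, ne_eq, mul_eq_zero, not_or] at hmu
  have h1 : mu ∈ L := hf (mem_support.2 hmu.1)
  have h2 : lam - mu ∈ L := hg (mem_support.2 hmu.2)
  exact ⟨h1, by simp only [Set.mem_Iic]; linarith [hL.nonneg h2]⟩

theorem fmul_eq_sum (hL : GoodSet L) (hf : support f ⊆ L) (hg : support g ⊆ L) (lam : ℝ)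
    {T : Finset ℝ} (hT : L ∩ Set.Iic lam ⊆ ↑T) :
    fmul f g lam = ∑ mu ∈ T, f mu * g (lam - mu) :=
  finsum_eq_sum_of_support_subset _ ((hL.conv_supp hf hg lam).trans hT)

theorem fmul_supp (hL : GoodSet L) (hf : support f ⊆ L) (hg : support g ⊆ L) :
    support (fmul f g) ⊆ L := by
  intro lam hlam
  by_contra hnot
  refine (mem_support.1 hlam) (finsum_eq_zero_of_forall_eq_zero fun mu => ?_)
  by_cases h1 : f mu = 0
  · simp [h1]
  by_cases h2 : g (lam - mu) = 0
  · simp [h2]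
  have := hL.add_mem (hf (mem_support.2 h1)) (hg (mem_support.2 h2))
  rw [add_sub_cancel] at this
  exact absurd this hnot

theorem fmul_comm (f g : ℝ → ℂ) : fmul f g = fmul g f := by
  funext lam
  show ∑ᶠ mu, f mu * g (lam - mu) = ∑ᶠ mu, g mu * f (lam - mu)
  have := finsum_comp_equiv (Equiv.subLeft lam) (f := fun mu => f mu * g (lam - mu))
  simp only [Equiv.subLeft_apply] at this
  rw [← this]
  exact finsum_congr fun mu => by rw [sub_sub_cancel]; ring

theorem fone_fmul (f : ℝ → ℂ) : fmul fone f = f := by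
  funext lam
  show ∑ᶠ mu, fone mu * f (lam - mu) = f lam
  rw [finsum_eq_single _ 0 (fun x hx => by simp [fone, hx])]
  simp [fone]

theorem fmul_fone (f : ℝ → ℂ) : fmul f fone = f := by
  rw [fmul_comm, fone_fmul]

theorem add_fmul (hL : GoodSet L) (hf₁ : support f₁ ⊆ L) (hf₂ : support f₂ ⊆ L)
    (hg : support g ⊆ L) : fmul (f₁ + f₂) g = fmul f₁ g + fmul f₂ g := by
  funext lam
  have hT : L ∩ Set.Iic lam ⊆ ↑(hL.fin lam).toFinset := by
    rw [Set.Finite.coe_toFinset]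
  rw [Pi.add_apply, hL.fmul_eq_sum (add_supp hf₁ hf₂) hg lam hT,
    hL.fmul_eq_sum hf₁ hg lam hT, hL.fmul_eq_sum hf₂ hg lam hT, ← Finset.sum_add_distrib]
  exact Finset.sum_congr rfl fun mu _ => by simp [add_mul]

theorem fmul_assoc (hL : GoodSet L) (hf : support f ⊆ L) (hg : support g ⊆ L)
    (hh : support h ⊆ L) : fmul (fmul f g) h = fmul f (fmul g h) := by
  funext lam
  set T := (hL.fin lam).toFinset with hTdef
  have hT : L ∩ Set.Iic lam ⊆ ↑T := by rw [hTdef, Set.Finite.coe_toFinset]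
  have hmemT : ∀ mu ∈ T, mu ∈ L ∧ mu ≤ lam := fun mu hmu => by
    simpa using (hL.fin lam).mem_toFinset.mp hmu
  rw [hL.fmul_eq_sum (hL.fmul_supp hf hg) hh lam hT]
  calc ∑ mu ∈ T, fmul f g mu * h (lam - mu)
      = ∑ mu ∈ T, ∑ nu ∈ T, f nu * g (mu - nu) * h (lam - mu) := by
        refine Finset.sum_congr rfl fun mu hmu => ?_
        rw [hL.fmul_eq_sum hf hg mu
          (fun x hx => hT ⟨hx.1, le_trans hx.2 (hmemT mu hmu).2⟩), Finset.sum_mul]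
    _ = ∑ nu ∈ T, ∑ mu ∈ T, f nu * (g (mu - nu) * h (lam - mu)) := by
        rw [Finset.sum_comm]
        exact Finset.sum_congr rfl fun _ _ => Finset.sum_congr rfl fun _ _ => by ring
    _ = ∑ nu ∈ T, f nu * fmul g h (lam - nu) := by
        refine Finset.sum_congr rfl fun nu hnu => ?_
        rw [← Finset.mul_sum]
        congr 1
        have hsupp : support (fun mu => g (mu - nu) * h (lam - mu)) ⊆ ↑T := by
          intro mu hmu
          simp only [mem_support, ne_eq, mul_eq_zero, not_or] at hmu
          have h1 : mu - nu ∈ L := hg (mem_support.2 hmu.1)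
          have h2 : lam - mu ∈ L := hh (mem_support.2 hmu.2)
          have hmuL : mu ∈ L := by
            have := hL.add_mem (hmemT nu hnu).1 h1
            rwa [add_sub_cancel] at this
          exact hT ⟨hmuL, by simp only [Set.mem_Iic]; linarith [hL.nonneg h2]⟩
        rw [← finsum_eq_sum_of_support_subset _ hsupp]
        have := finsum_comp_equiv (Equiv.addLeft nu) (f := fun mu => g (mu - nu) * h (lam - mu))
        simp only [Equiv.coe_addLeft] at this
        rw [← this]
        exact finsum_congr fun rho => by rw [add_sub_cancel_left, sub_add_eq_sub_sub]
    _ = fmul f (fmul g h) lam :=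
        (hL.fmul_eq_sum hf (hL.fmul_supp hg hh) lam hT).symm

theorem fderiv'_fmul (hL : GoodSet L) (hf : support f ⊆ L) (hg : support g ⊆ L) :
    fderiv' (fmul f g) = fmul (fderiv' f) g + fmul f (fderiv' g) := by
  funext lam
  have hT : L ∩ Set.Iic lam ⊆ ↑(hL.fin lam).toFinset := by
    rw [Set.Finite.coe_toFinset]
  show (lam : ℂ) * fmul f g lam = _
  rw [hL.fmul_eq_sum hf hg lam hT, Finset.mul_sum, Pi.add_apply,
    hL.fmul_eq_sum (fderiv'_supp hf) hg lam hT,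
    hL.fmul_eq_sum hf (fderiv'_supp hg) lam hT, ← Finset.sum_add_distrib]
  refine Finset.sum_congr rfl fun mu _ => ?_
  show (lam : ℂ) * (f mu * g (lam - mu))
      = ((mu : ℝ) : ℂ) * f mu * g (lam - mu) + f mu * (((lam - mu : ℝ) : ℂ) * g (lam - mu))
  push_cast
  ring

theorem fderiv'_fone_add (h : ℝ → ℂ) : fderiv' (fone + h) = fderiv' h := by
  funext lam
  rcases eq_or_ne lam 0 with h0 | h0 <;> simp [fderiv', fone, h0, mul_add]

theorem fmul_congr_below (hL : GoodSet L) (hf : support f ⊆ L) (hf' : support f' ⊆ L)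
    (hg : support g ⊆ L) (hg' : support g' ⊆ L) {lam0 : ℝ}
    (hF : ∀ mu ≤ lam0, f mu = f' mu) (hG : ∀ mu ≤ lam0, g mu = g' mu) :
    ∀ lam ≤ lam0, fmul f g lam = fmul f' g' lam := by
  intro lam hlam
  refine finsum_congr fun mu => ?_
  by_cases h1 : mu ≤ lam0
  · by_cases h2 : lam - mu ≤ lam0
    · rw [hF mu h1, hG _ h2]
    · push_neg at h2
      have e1 : f mu = 0 := by
        by_contra hc
        have := hL.nonneg (hf (mem_support.2 hc))
        linarith
      have e2 : f' mu = 0 := by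
        by_contra hc
        have := hL.nonneg (hf' (mem_support.2 hc))
        linarith
      rw [e1, e2, zero_mul, zero_mul]
  · push_neg at h1
    have e1 : g (lam - mu) = 0 := by
      by_contra hc
      have := hL.nonneg (hg (mem_support.2 hc))
      linarith
    have e2 : g' (lam - mu) = 0 := by
      by_contra hc
      have := hL.nonneg (hg' (mem_support.2 hc))
      linarith
    rw [e1, e2, mul_zero, mul_zero]

theorem fmul_at_zero (hL : GoodSet L) (hf : support f ⊆ L) (hg : support g ⊆ L) :
    fmul f g 0 = f 0 * g 0 := by
  show ∑ᶠ mu, f mu * g (0 - mu) = _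
  rw [finsum_eq_single _ 0 ?_]
  · norm_num
  · intro x hx
    by_cases h1 : f x = 0
    · simp [h1]
    have hx0 : 0 ≤ x := hL.nonneg (hf (mem_support.2 h1))
    have : g (0 - x) = 0 := by
      by_contra hc
      have := hL.nonneg (hg (mem_support.2 hc))
      have hxpos : 0 < x := lt_of_le_of_ne hx0 (Ne.symm hx)
      linarith
    rw [this, mul_zero]

theorem inv_congr_below {A A' B B' : ℝ → ℂ} (hL : GoodSet L) (hA : support A ⊆ L)
    (hA' : support A' ⊆ L) (hB : support B ⊆ L) (hB' : support B' ⊆ L)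
    (hAB : fmul A B = fone) (hAB' : fmul A' B' = fone) {lam0 : ℝ}
    (hAA' : ∀ mu ≤ lam0, A mu = A' mu) : ∀ mu ≤ lam0, B mu = B' mu := by
  have hA0B0 : A 0 * B 0 = 1 := by
    have h := congrFun hAB 0
    rw [hL.fmul_at_zero hA hB] at h
    simpa [fone] using h
  have hA0 : A 0 ≠ 0 := left_ne_zero_of_mul_eq_one hA0B0
  have key : ∀ n : ℕ, ∀ mu : ℝ, (L ∩ Set.Iio mu).ncard = n → mu ≤ lam0 → B mu = B' mu := by
    intro n
    induction n using Nat.strong_induction_on with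
    | _ n ih =>
      intro mu hcard hmu
      by_cases hmuL : mu ∈ L
      · have hmu0 : 0 ≤ mu := hL.nonneg hmuL
        have hlam00 : (0:ℝ) ≤ lam0 := le_trans hmu0 hmu
        set T := (hL.fin mu).toFinset with hTdef
        have hT : L ∩ Set.Iic mu ⊆ ↑T := by rw [hTdef, Set.Finite.coe_toFinset]
        have h0T : (0:ℝ) ∈ T := (hL.fin mu).mem_toFinset.2 ⟨hL.zero_mem, hmu0⟩
        have hfinIio : (L ∩ Set.Iio mu).Finite :=
          (hL.fin mu).subset (fun x hx => ⟨hx.1, Set.mem_Iic.2 (le_of_lt (Set.mem_Iio.1 hx.2))⟩)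
        have e1 : A 0 * B mu + ∑ nu ∈ T.erase 0, A nu * B (mu - nu) = fone mu := by
          have hh := congrFun hAB mu
          rw [hL.fmul_eq_sum hA hB mu hT,
            ← Finset.add_sum_erase T (fun nu => A nu * B (mu - nu)) h0T, sub_zero] at hh
          exact hh
        have e2 : A' 0 * B' mu + ∑ nu ∈ T.erase 0, A' nu * B' (mu - nu) = fone mu := by
          have hh := congrFun hAB' mu
          rw [hL.fmul_eq_sum hA' hB' mu hT,
            ← Finset.add_sum_erase T (fun nu => A' nu * B' (mu - nu)) h0T, sub_zero] at hh
          exact hh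
        have hsum : ∑ nu ∈ T.erase 0, A nu * B (mu - nu)
            = ∑ nu ∈ T.erase 0, A' nu * B' (mu - nu) := by
          refine Finset.sum_congr rfl fun nu hnu => ?_
          have hnu0 : nu ≠ 0 := Finset.ne_of_mem_erase hnu
          have hnuT : nu ∈ T := Finset.mem_of_mem_erase hnu
          have hnuL : nu ∈ L ∧ nu ≤ mu := by
            simpa using (hL.fin mu).mem_toFinset.1 hnuT
          have hnupos : 0 < nu := lt_of_le_of_ne (hL.nonneg hnuL.1) (Ne.symm hnu0)
          have hBB' : B (mu - nu) = B' (mu - nu) := by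
            by_cases hmn : mu - nu ∈ L
            · refine ih ((L ∩ Set.Iio (mu - nu)).ncard) ?_ _ rfl (by linarith)
              rw [← hcard]
              refine Set.ncard_lt_ncard ?_ hfinIio
              have hsub : L ∩ Set.Iio (mu - nu) ⊆ L ∩ Set.Iio mu := fun x hx =>
                ⟨hx.1, Set.mem_Iio.2 (lt_trans (Set.mem_Iio.1 hx.2) (sub_lt_self mu hnupos))⟩
              refine (Set.ssubset_iff_of_subset hsub).2
                ⟨mu - nu, ⟨hmn, by simp only [Set.mem_Iio]; linarith⟩, fun hc => ?_⟩
              exact absurd (Set.mem_Iio.1 hc.2) (lt_irrefl _)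
            · have b1 : B (mu - nu) = 0 := by
                by_contra hc; exact hmn (hB (mem_support.2 hc))
              have b2 : B' (mu - nu) = 0 := by
                by_contra hc; exact hmn (hB' (mem_support.2 hc))
              rw [b1, b2]
          rw [hAA' nu (le_trans hnuL.2 hmu), hBB']
        have e3 := e1.trans e2.symm
        rw [hsum] at e3
        have e4 := add_right_cancel e3
        rw [← hAA' 0 hlam00] at e4
        exact mul_left_cancel₀ hA0 e4
      · have b1 : B mu = 0 := by
          by_contra hc; exact hmuL (hB (mem_support.2 hc))
        have b2 : B' mu = 0 := by
          by_contra hc; exact hmuL (hB' (mem_support.2 hc))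
        rw [b1, b2]
  exact fun mu hmu => key _ mu rfl hmu

theorem fmul_fmul_fmul_comm {a b c d : ℝ → ℂ} (hL : GoodSet L) (ha : support a ⊆ L)
    (hb : support b ⊆ L) (hc : support c ⊆ L) (hd : support d ⊆ L) :
    fmul (fmul a b) (fmul c d) = fmul (fmul a c) (fmul b d) := by
  rw [hL.fmul_assoc ha hb (hL.fmul_supp hc hd), ← hL.fmul_assoc hb hc hd, fmul_comm b c,
    hL.fmul_assoc hc hb hd, ← hL.fmul_assoc ha hc (hL.fmul_supp hb hd)]

end GoodSet

/-- Partial products of the inverses `g n = (1 + f n)⁻¹`. -/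
def invPartialProd (g : ℕ → ℝ → ℂ) : ℕ → ℝ → ℂ
  | 0 => fone
  | N + 1 => fmul (invPartialProd g N) (g N)

section Products

variable {L : Set ℝ} {f g : ℕ → ℝ → ℂ}

theorem partialProd_supp (hL : GoodSet L) (hsupp : ∀ n, Function.support (f n) ⊆ L) (N : ℕ) :
    Function.support (partialProd f N) ⊆ L := by
  induction N with
  | zero => exact hL.fone_supp
  | succ N ih =>
    exact hL.fmul_supp ih (GoodSet.add_supp hL.fone_supp (hsupp N))

theorem invPartialProd_supp (hL : GoodSet L) (hg : ∀ n, Function.support (g n) ⊆ L) (N : ℕ) :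
    Function.support (invPartialProd g N) ⊆ L := by
  induction N with
  | zero => exact hL.fone_supp
  | succ N ih => exact hL.fmul_supp ih (hg N)

theorem partialProd_fmul_inv (hL : GoodSet L) (hsupp : ∀ n, Function.support (f n) ⊆ L)
    (hg : ∀ n, Function.support (g n) ⊆ L)
    (hginv : ∀ n, fmul (fone + f n) (g n) = fone) (N : ℕ) :
    fmul (partialProd f N) (invPartialProd g N) = fone := by
  induction N with
  | zero =>
    show fmul fone fone = fone
    rw [GoodSet.fone_fmul]
  | succ N ih =>
    show fmul (fmul (partialProd f N) (fone + f N))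
        (fmul (invPartialProd g N) (g N)) = fone
    rw [GoodSet.fmul_fmul_fmul_comm hL (partialProd_supp hL hsupp N)
      (GoodSet.add_supp hL.fone_supp (hsupp N)) (invPartialProd_supp hL hg N) (hg N),
      ih, hginv N, GoodSet.fone_fmul]

theorem logDeriv_partialProd (hL : GoodSet L) (hsupp : ∀ n, Function.support (f n) ⊆ L)
    (hg : ∀ n, Function.support (g n) ⊆ L)
    (hginv : ∀ n, fmul (fone + f n) (g n) = fone) (N : ℕ) :
    fmul (fderiv' (partialProd f N)) (invPartialProd g N)
      = fun lam => ∑ n ∈ Finset.range N, fmul (fderiv' (f n)) (g n) lam := by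
  induction N with
  | zero =>
    funext lam
    have hD : fderiv' fone = fun _ => (0 : ℂ) := by
      funext x
      rcases eq_or_ne x 0 with h | h <;> simp [fderiv', fone, h]
    show fmul (fderiv' fone) fone lam = _
    rw [hD]
    show (∑ᶠ mu : ℝ, (0 : ℂ) * fone (lam - mu)) = _
    simp
  | succ N ih =>
    have hpp := partialProd_supp hL hsupp N
    have hipp := invPartialProd_supp hL hg N
    have hb : Function.support (fone + f N) ⊆ L := GoodSet.add_supp hL.fone_supp (hsupp N)
    show fmul (fderiv' (fmul (partialProd f N) (fone + f N)))
        (fmul (invPartialProd g N) (g N)) = _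
    rw [hL.fderiv'_fmul hpp hb, GoodSet.fderiv'_fone_add,
      hL.add_fmul (hL.fmul_supp (GoodSet.fderiv'_supp hpp) hb)
        (hL.fmul_supp hpp (GoodSet.fderiv'_supp (hsupp N)))
        (hL.fmul_supp hipp (hg N)),
      GoodSet.fmul_fmul_fmul_comm hL (GoodSet.fderiv'_supp hpp) hb hipp (hg N),
      GoodSet.fmul_fmul_fmul_comm hL hpp (GoodSet.fderiv'_supp (hsupp N)) hipp (hg N),
      hginv N, partialProd_fmul_inv hL hsupp hg hginv N,
      GoodSet.fmul_fone, GoodSet.fone_fmul, ih]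
    funext lam
    simp [Finset.sum_range_succ]

end Products

/-! ### The lattice is a good set -/

theorem lattice_goodSet {m : ℕ} (b : ℕ) (hb : 0 < b) (θ : Fin m → ℝ) (hθ : ∀ i, 1 < θ i) :
    GoodSet (lattice b θ) := by
  have hb0 : (0:ℝ) < b := by exact_mod_cast hb
  have hθ0 : ∀ i, (0:ℝ) ≤ θ i := fun i => le_of_lt (lt_trans one_pos (hθ i))
  have hmono1' : ∀ (d : Fin m →₀ ℕ) (s : Finset (Fin m)), (1:ℝ) ≤ ∏ i ∈ s, θ i ^ d i := by
    intro d s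
    calc (1:ℝ) = ∏ _i ∈ s, 1 := by simp
      _ ≤ ∏ i ∈ s, θ i ^ d i :=
        Finset.prod_le_prod (fun i _ => zero_le_one)
          (fun i _ => one_le_pow₀ (le_of_lt (hθ i)))
  have hmono1 : ∀ d : Fin m →₀ ℕ, (1:ℝ) ≤ ∏ i, θ i ^ d i := fun d => hmono1' d Finset.univ
  have heval : ∀ F : MvPolynomial (Fin m) ℕ,
      MvPolynomial.eval₂ (Nat.castRingHom ℝ) θ F
        = ∑ d ∈ F.support, ((F.coeff d : ℕ) : ℝ) * ∏ i, θ i ^ d i := by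
    intro F
    rw [MvPolynomial.eval₂_eq']
    simp
  have hevalnn : ∀ F : MvPolynomial (Fin m) ℕ,
      0 ≤ MvPolynomial.eval₂ (Nat.castRingHom ℝ) θ F := by
    intro F
    rw [heval]
    exact Finset.sum_nonneg fun d _ =>
      mul_nonneg (Nat.cast_nonneg _) (le_trans zero_le_one (hmono1 d))
  constructor
  · exact ⟨0, by simp⟩
  · rintro a c ⟨F, rfl⟩ ⟨G, rfl⟩
    exact ⟨F + G, by rw [MvPolynomial.eval₂_add]; ring⟩
  · rintro a ⟨F, rfl⟩
    exact mul_nonneg (by positivity) (hevalnn F)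
  · intro M
    set C : ℕ := ⌊(b:ℝ) * M⌋₊ with hC
    have hK : ∀ i, ∃ k, (b:ℝ) * M < θ i ^ k := fun i => pow_unbounded_of_one_lt _ (hθ i)
    choose K hKlt using hK
    set Kf : Fin m →₀ ℕ := Finsupp.equivFunOnFinite.symm K with hKf
    set DC : (Fin m →₀ ℕ) →₀ ℕ :=
      Finsupp.indicator (Finset.Iic Kf) (fun _ _ => C) with hDC
    set Φ : ((Fin m →₀ ℕ) →₀ ℕ) → ℝ :=
      fun D => (b:ℝ)⁻¹ * D.sum fun d c => (c:ℝ) * ∏ i, θ i ^ d i with hΦ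
    refine Set.Finite.subset (Set.Finite.image Φ (Finset.Iic DC).finite_toSet) ?_
    rintro x ⟨⟨F, rfl⟩, hxM⟩
    simp only [Set.mem_Iic] at hxM
    set v := MvPolynomial.eval₂ (Nat.castRingHom ℝ) θ F with hv
    have hvM : v ≤ (b:ℝ) * M := by
      have h1 : (b:ℝ)⁻¹ * v ≤ M := hxM
      calc v = (b:ℝ) * ((b:ℝ)⁻¹ * v) := by field_simp
        _ ≤ (b:ℝ) * M := by
            exact mul_le_mul_of_nonneg_left h1 (le_of_lt hb0)
    have hterm : ∀ d ∈ F.support, ((F.coeff d : ℕ) : ℝ) * ∏ i, θ i ^ d i ≤ (b:ℝ) * M := by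
      intro d hd
      refine le_trans ?_ hvM
      rw [hv, heval F]
      exact Finset.single_le_sum (f := fun d => ((F.coeff d : ℕ) : ℝ) * ∏ i, θ i ^ d i)
        (fun e _ => mul_nonneg (Nat.cast_nonneg _) (le_trans zero_le_one (hmono1 e))) hd
    set D : (Fin m →₀ ℕ) →₀ ℕ :=
      Finsupp.onFinset F.support (fun d => F.coeff d)
        (fun d h => MvPolynomial.mem_support_iff.2 h) with hD
    refine ⟨D, ?_, ?_⟩
    · simp only [Finset.coe_Iic, Set.mem_Iic]
      rw [Finsupp.le_def]
      intro d
      by_cases hd : F.coeff d = 0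
      · simp [hD, Finsupp.onFinset_apply, hd]
      have hdsupp : d ∈ F.support := MvPolynomial.mem_support_iff.2 hd
      have hone : (1:ℝ) ≤ ((F.coeff d : ℕ) : ℝ) := by
        exact_mod_cast Nat.one_le_iff_ne_zero.2 hd
      have hterm' := hterm d hdsupp
      have hcoeff : ((F.coeff d : ℕ) : ℝ) ≤ (b:ℝ) * M := by
        calc ((F.coeff d : ℕ) : ℝ) = ((F.coeff d : ℕ) : ℝ) * 1 := by ring
          _ ≤ ((F.coeff d : ℕ) : ℝ) * ∏ i, θ i ^ d i :=
              mul_le_mul_of_nonneg_left (hmono1 d) (Nat.cast_nonneg _)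
          _ ≤ (b:ℝ) * M := hterm'
      have hmonole : (∏ i, θ i ^ d i) ≤ (b:ℝ) * M := by
        calc (∏ i, θ i ^ d i) = 1 * ∏ i, θ i ^ d i := by ring
          _ ≤ ((F.coeff d : ℕ) : ℝ) * ∏ i, θ i ^ d i :=
              mul_le_mul_of_nonneg_right hone (le_trans zero_le_one (hmono1 d))
          _ ≤ (b:ℝ) * M := hterm'
      have hdK : d ≤ Kf := by
        rw [Finsupp.le_def]
        intro i
        have h1 : θ i ^ d i ≤ ∏ j, θ j ^ d j := by
          rw [← Finset.mul_prod_erase Finset.univ _ (Finset.mem_univ i)]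
          exact le_mul_of_one_le_right (pow_nonneg (hθ0 i) _) (hmono1' d _)
        have h2 : θ i ^ d i < θ i ^ K i := lt_of_le_of_lt (le_trans h1 hmonole) (hKlt i)
        have h3 : d i < K i := (pow_lt_pow_iff_right₀ (hθ i)).1 h2
        have : Kf i = K i := by simp [hKf]
        rw [this]
        exact le_of_lt h3
      have hDCd : DC d = C := by
        rw [hDC, Finsupp.indicator_of_mem (Finset.mem_Iic.2 hdK)]
      rw [hDCd]
      have : D d = F.coeff d := by simp [hD, Finsupp.onFinset_apply]
      rw [this]
      exact Nat.le_floor hcoeff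
    · rw [hΦ]
      simp only
      congr 1
      rw [hD, Finsupp.sum_of_support_subset _ Finsupp.support_onFinset_subset _
        (fun d _ => by simp), hv, heval F]
      exact Finset.sum_congr rfl fun d _ => by rw [Finsupp.onFinset_apply]

/-- Logarithmic derivative of an infinite product:
`x (∏ₙ (1+fₙ))' / ∏ₙ (1+fₙ) = Σₙ x fₙ' (1+fₙ)⁻¹`,
where `ord fₙ > 0` and `ord fₙ → ∞`.  The infinite product `P` is the limit of
the partial products (coefficientwise stabilization, which is convergence in
the valuation metric), `Q = P⁻¹`, and `g n = (1 + f n)⁻¹`. -/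
theorem logDeriv_infinite_product {m : ℕ} (b : ℕ) (hb : 0 < b)
    (θ : Fin m → ℝ) (hθ : ∀ i, 1 < θ i)
    (f : ℕ → ℝ → ℂ) (hsupp : ∀ n, Function.support (f n) ⊆ lattice b θ)
    (hord : ∀ n, ∀ lam ≤ (0 : ℝ), f n lam = 0)
    (hordtop : ∀ M : ℝ, ∃ N, ∀ n ≥ N, ∀ lam ≤ M, f n lam = 0)
    (g : ℕ → ℝ → ℂ) (hg : ∀ n, Function.support (g n) ⊆ lattice b θ)
    (hginv : ∀ n, fmul (fone + f n) (g n) = fone)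
    (P : ℝ → ℂ) (hP : Function.support P ⊆ lattice b θ)
    (hPlim : ∀ lam : ℝ, ∃ N₀, ∀ N ≥ N₀, partialProd f N lam = P lam)
    (Q : ℝ → ℂ) (hQ : Function.support Q ⊆ lattice b θ)
    (hQinv : fmul P Q = fone) :
    fmul (fderiv' P) Q = fun lam => ∑ᶠ n : ℕ, fmul (fderiv' (f n)) (g n) lam := by
  have hL : GoodSet (lattice b θ) := lattice_goodSet b hb θ hθ
  set L := lattice b θ with hLdef
  funext lam
  obtain ⟨N₁, hN₁⟩ := hordtop lam
  choose N₀ hN₀ using hPlim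
  set T := (hL.fin lam).toFinset with hT
  set N := max N₁ (T.sup N₀) with hN
  have hppP : ∀ mu ≤ lam, partialProd f N mu = P mu := by
    intro mu hmu
    by_cases hmuL : mu ∈ L
    · refine hN₀ mu N (le_trans ?_ (le_max_right _ _))
      exact Finset.le_sup ((hL.fin lam).mem_toFinset.2 ⟨hmuL, hmu⟩)
    · have b1 : partialProd f N mu = 0 := by
        by_contra hc
        exact hmuL (partialProd_supp hL hsupp N (Function.mem_support.2 hc))
      have b2 : P mu = 0 := by
        by_contra hc; exact hmuL (hP (Function.mem_support.2 hc))
      rw [b1, b2]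
  have hQipp : ∀ mu ≤ lam, Q mu = invPartialProd g N mu :=
    GoodSet.inv_congr_below hL hP (partialProd_supp hL hsupp N) hQ
      (invPartialProd_supp hL hg N) hQinv (partialProd_fmul_inv hL hsupp hg hginv N)
      (fun mu h => (hppP mu h).symm)
  have lhs_eq : fmul (fderiv' P) Q lam
      = fmul (fderiv' (partialProd f N)) (invPartialProd g N) lam :=
    GoodSet.fmul_congr_below hL (GoodSet.fderiv'_supp hP)
      (GoodSet.fderiv'_supp (partialProd_supp hL hsupp N)) hQ (invPartialProd_supp hL hg N)
      (fun mu h => by simp [fderiv', hppP mu h]) hQipp lam le_rfl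
  have hsub : Function.support (fun n => fmul (fderiv' (f n)) (g n) lam)
      ⊆ ↑(Finset.range N) := by
    intro n hn
    simp only [Finset.coe_range, Set.mem_Iio]
    by_contra hcon
    push_neg at hcon
    refine (Function.mem_support.1 hn) (finsum_eq_zero_of_forall_eq_zero fun mu => ?_)
    by_cases hgz : g n (lam - mu) = 0
    · simp [hgz]
    · have hmem : lam - mu ∈ L := hg n (Function.mem_support.2 hgz)
      have hmule : mu ≤ lam := by linarith [hL.nonneg hmem]
      have hf0 : f n mu = 0 := hN₁ n (le_trans (le_max_left _ _) hcon) mu hmule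
      simp [fderiv', hf0]
  rw [lhs_eq, congrFun (logDeriv_partialProd hL hsupp hg hginv N) lam]
  exact (finsum_eq_sum_of_support_subset _ hsub).symm
end
end

section
/- Modified Möbius inversion: Let b ≥ 2 and 𝔻 = ℚ_b' − ℕ' be the set of positive rationals of the form n/b^t (n ∈ ℕ', t ≥ 0) that are not in ℕ'. Let (A_n)_{n∈𝔻} be complex numbers and define B_m = Σ_{n∈𝔻, n|m} A_n (a finite sum) for m ∈ 𝔻, where n|m means m/n ∈ ℕ. Then A_n = Σ_{m∈𝔻, m|n} μ(n/m) B_m for all n ∈ 𝔻. -/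
noncomputable section

/-- `ℕ' = { N ∈ ℕ : every prime dividing N divides B }` (with `B = b₀b₁⋯bₘ`). -/
def Nprime (B : ℕ) : Set ℕ :=
  {N | 0 < N ∧ ∀ p : ℕ, p.Prime → p ∣ N → p ∣ B}

/-- `ℚ_b' = { n/b^t : n ∈ ℕ', t ≥ 0 }`. -/
def Qbprime (b B : ℕ) : Set ℚ :=
  {q | ∃ n ∈ Nprime B, ∃ t : ℕ, q = (n : ℚ) / (b : ℚ) ^ t}

/-- `𝔻 = ℚ_b' − ℕ'`: elements of `ℚ_b'` that are not (the image of) an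
element of `ℕ'`. -/
def Dset (b B : ℕ) : Set ℚ :=
  {q ∈ Qbprime b B | ¬ ∃ n ∈ Nprime B, q = (n : ℚ)}

/-- Divisibility among positive rationals: `a ∣ c` iff `c/a ∈ ℕ`. -/
def qdvd (a c : ℚ) : Prop := ∃ k : ℕ, 0 < k ∧ c = a * (k : ℚ)

lemma dvd_pow_of_primes : ∀ (D : ℕ), 0 < D → ∀ b : ℕ, (∀ p : ℕ, p.Prime → p ∣ D → p ∣ b) → D ∣ b ^ D := by
  intro D
  induction D using Nat.strong_induction_on with
  | _ D ih =>
    intro hD b h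
    rcases eq_or_ne D 1 with rfl | hD1
    · simp
    · obtain ⟨p, hp, hpD⟩ := Nat.exists_prime_and_dvd hD1
      obtain ⟨D', rfl⟩ := hpD
      have hp2 := hp.two_le
      have hD' : 0 < D' := by by_contra h'; push_neg at h'; interval_cases D' <;> simp_all
      have hD'lt : D' < p * D' := by nlinarith
      have h1 : D' ∣ b ^ D' := ih D' hD'lt hD' b (fun q hq hqD => h q hq (hqD.mul_left p))
      have h2 : p ∣ b := h p hp (Dvd.intro D' rfl)
      have h3 : p * D' ∣ b * b ^ D' := mul_dvd_mul h2 h1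
      calc p * D' ∣ b ^ (D' + 1) := by rwa [pow_succ, mul_comm (b ^ D') b]
      _ ∣ b ^ (p * D') := pow_dvd_pow b (by nlinarith)

lemma mem_Dset_iff {b B : ℕ} (hb : 2 ≤ b) (hbB : b ∣ B) {q : ℚ} :
    q ∈ Dset b B ↔ 0 < q ∧ (∀ p : ℕ, p.Prime → (p : ℤ) ∣ q.num → p ∣ B) ∧
      (∀ p : ℕ, p.Prime → p ∣ q.den → p ∣ b) ∧ q.den ≠ 1 := by
  have hb0 : (0:ℚ) < (b:ℚ) := by exact_mod_cast (by omega : 0 < b)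
  constructor
  · rintro ⟨⟨N, ⟨hN, hNB⟩, t, rfl⟩, hnot⟩
    set q : ℚ := (N : ℚ) / (b : ℚ) ^ t with hq
    have hbt : (0:ℚ) < (b:ℚ) ^ t := by positivity
    have hq0 : 0 < q := by rw [hq]; positivity
    have hqnum : 0 < q.num := Rat.num_pos.mpr hq0
    have key : q.num * (b : ℤ) ^ t = (N : ℤ) * q.den := by
      have h1 : (q.num : ℚ) / (q.den : ℚ) = (N : ℚ) / (b : ℚ) ^ t := by
        rw [Rat.num_div_den]
      have hden : (0:ℚ) < (q.den : ℚ) := by exact_mod_cast q.pos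
      field_simp at h1
      exact_mod_cast (by linear_combination h1 : (q.num:ℚ) * (b:ℚ)^t = (N:ℚ) * (q.den:ℚ))
    have hnumdvd : q.num.natAbs ∣ N := by
      have h1 : q.num ∣ (N : ℤ) * q.den := ⟨(b:ℤ)^t, key.symm⟩
      have h2 : q.num.natAbs ∣ ((N : ℤ) * (q.den:ℤ)).natAbs := Int.natAbs_dvd_natAbs.mpr h1
      rw [Int.natAbs_mul, Int.natAbs_natCast, Int.natAbs_natCast] at h2
      exact Nat.Coprime.dvd_of_dvd_mul_right q.reduced h2
    have hdendvd : q.den ∣ b ^ t := by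
      have h1 : (q.den : ℤ) ∣ q.num * (b:ℤ)^t := ⟨N, by linarith [key]⟩
      have h2 : (q.den:ℤ).natAbs ∣ (q.num * (b:ℤ)^t).natAbs := Int.natAbs_dvd_natAbs.mpr h1
      rw [Int.natAbs_mul, Int.natAbs_natCast, ← Int.natCast_pow, Int.natAbs_natCast] at h2
      exact Nat.Coprime.dvd_of_dvd_mul_left q.reduced.symm h2
    have hnumB : ∀ p : ℕ, p.Prime → (p : ℤ) ∣ q.num → p ∣ B := by
      intro p hp hpq
      have h3 : p ∣ q.num.natAbs := by simpa using Int.natAbs_dvd_natAbs.mpr hpq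
      exact hNB p hp (h3.trans hnumdvd)
    refine ⟨hq0, hnumB, fun p hp hpd => hp.dvd_of_dvd_pow (hpd.trans hdendvd), ?_⟩
    intro hden1
    apply hnot
    have htn : ((q.num.toNat : ℤ)) = q.num := Int.toNat_of_nonneg hqnum.le
    refine ⟨q.num.toNat, ⟨by omega, ?_⟩, ?_⟩
    · intro p hp hpq
      exact hnumB p hp (by exact_mod_cast htn ▸ Int.natCast_dvd_natCast.mpr hpq)
    · conv_lhs => rw [← Rat.num_div_den q]
      rw [hden1]
      simp only [Nat.cast_one, div_one]
      exact_mod_cast htn.symm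
  · rintro ⟨hq0, hnum, hden, hden1⟩
    have hqnum : 0 < q.num := Rat.num_pos.mpr hq0
    have hdpos : 0 < q.den := q.pos
    have htn : ((q.num.toNat : ℤ)) = q.num := Int.toNat_of_nonneg hqnum.le
    obtain ⟨c, hc⟩ := dvd_pow_of_primes q.den hdpos b hden
    have hbpos : 0 < b := by omega
    have hbt : 0 < b ^ q.den := pow_pos hbpos _
    have hc0 : 0 < c := Nat.pos_of_ne_zero (fun h => by rw [h, Nat.mul_zero] at hc; omega)
    have hnum0 : 0 < q.num.toNat := by omega
    refine ⟨⟨q.num.toNat * c, ⟨by positivity, ?_⟩, q.den, ?_⟩, ?_⟩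
    · intro p hp hpd
      rcases hp.dvd_mul.mp hpd with h1 | h1
      · exact hnum p hp (htn ▸ Int.natCast_dvd_natCast.mpr h1)
      · have h2 : p ∣ b ^ q.den := h1.trans ⟨q.den, by rw [hc]; ring⟩
        exact (hp.dvd_of_dvd_pow h2).trans hbB
    · have hbtne : ((b:ℚ) ^ q.den) ≠ 0 := by positivity
      have hdne : ((q.den : ℚ)) ≠ 0 := by positivity
      have h4 : ((b:ℚ)) ^ q.den = (q.den : ℚ) * (c : ℚ) := by exact_mod_cast hc
      have e1 : ((q.num:ℚ) / (q.den:ℚ)) * (q.den:ℚ) = q * (q.den:ℚ) := by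
        rw [Rat.num_div_den]
      have e2 : q * ((q.den:ℚ)) = ((q.num:ℚ)) := by
        rw [← e1]; exact div_mul_cancel₀ _ hdne
      have h5 : q * ((b:ℚ) ^ q.den) = ((q.num.toNat * c : ℕ) : ℚ) := by
        rw [h4, ← mul_assoc, e2]
        push_cast
        rw [show ((q.num.toNat : ℚ)) = ((q.num : ℚ)) from by exact_mod_cast htn]
      rw [eq_div_iff hbtne, h5]
    · rintro ⟨n, _, h⟩
      exact hden1 (by rw [h]; exact Rat.den_natCast n)

lemma qdvd_key {m x : ℚ} (hm : m ≠ 0) {k : ℕ} (h : x = m * k) : (x / m).num.toNat = k := by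
  rw [h, mul_comm, mul_div_assoc, div_self hm, mul_one]
  simp

lemma qdvd_cross {x y : ℚ} {k : ℕ} (h : y = x * k) :
    y.num * (x.den : ℤ) = x.num * k * y.den := by
  have h1 : (y.num : ℚ) / (y.den : ℚ) = ((x.num : ℚ) / (x.den : ℚ)) * k := by
    rw [Rat.num_div_den, Rat.num_div_den]; exact h
  have hx : ((x.den : ℚ)) ≠ 0 := by exact_mod_cast x.den_nz
  have hy : ((y.den : ℚ)) ≠ 0 := by exact_mod_cast y.den_nz
  field_simp at h1
  exact_mod_cast (by linear_combination h1 : (y.num:ℚ) * (x.den:ℚ) = (x.num:ℚ) * (k:ℚ) * (y.den:ℚ))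

lemma num_dvd_of_qdvd {x y : ℚ} (h : qdvd x y) : x.num.natAbs ∣ y.num.natAbs := by
  obtain ⟨k, _, hk⟩ := h
  have h1 : x.num ∣ y.num * (x.den : ℤ) := ⟨k * y.den, by rw [qdvd_cross hk]; ring⟩
  have h2 : x.num.natAbs ∣ y.num.natAbs * x.den := by
    have := Int.natAbs_dvd_natAbs.mpr h1
    rwa [Int.natAbs_mul, Int.natAbs_natCast] at this
  exact Nat.Coprime.dvd_of_dvd_mul_right x.reduced h2

lemma den_dvd_of_qdvd {x y : ℚ} (h : qdvd x y) : y.den ∣ x.den := by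
  obtain ⟨k, _, hk⟩ := h
  have h1 : (y.den : ℤ) ∣ y.num * (x.den : ℤ) := ⟨x.num * k, by rw [qdvd_cross hk]; ring⟩
  have h2 : y.den ∣ y.num.natAbs * x.den := by
    have := Int.natAbs_dvd_natAbs.mpr h1
    rwa [Int.natAbs_mul, Int.natAbs_natCast, Int.natAbs_natCast] at this
  exact Nat.Coprime.dvd_of_dvd_mul_left y.reduced.symm h2

lemma mem_Dset_between {b B : ℕ} (hb : 2 ≤ b) (hbB : b ∣ B) {l m n : ℚ}
    (hl : l ∈ Dset b B) (hn : n ∈ Dset b B) (hlm : qdvd l m) (hmn : qdvd m n) :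
    m ∈ Dset b B := by
  obtain ⟨hl0, hlnum, hlden, _⟩ := (mem_Dset_iff hb hbB).mp hl
  obtain ⟨hn0, hnnum, hnden, hnden1⟩ := (mem_Dset_iff hb hbB).mp hn
  rw [mem_Dset_iff hb hbB]
  refine ⟨?_, ?_, ?_, ?_⟩
  · obtain ⟨j, hj0, hj⟩ := hlm
    rw [hj]
    positivity
  · intro p hp hpm
    apply hnnum p hp
    have h1 : p ∣ m.num.natAbs := by simpa using Int.natAbs_dvd_natAbs.mpr hpm
    have h2 : p ∣ n.num.natAbs := h1.trans (num_dvd_of_qdvd hmn)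
    have h3 : (p : ℤ) ∣ (n.num.natAbs : ℤ) := Int.natCast_dvd_natCast.mpr h2
    exact h3.trans (Int.natAbs_dvd.mpr dvd_rfl)
  · intro p hp hpd
    exact hlden p hp (hpd.trans (den_dvd_of_qdvd hlm))
  · intro hm1
    exact hnden1 (Nat.eq_one_of_dvd_one (hm1 ▸ den_dvd_of_qdvd hmn))

lemma sum_moebius_div (K : ℕ) :
    ∑ d ∈ K.divisors, (ArithmeticFunction.moebius d : ℤ) = if K = 1 then 1 else 0 := by
  rw [← ArithmeticFunction.coe_mul_zeta_apply, ArithmeticFunction.moebius_mul_coe_zeta,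
    ArithmeticFunction.one_apply]

/-- Modified Möbius inversion on `𝔻 = ℚ_b' − ℕ'`:  if
`B_m = Σ_{n∈𝔻, n|m} A_n` (a finite sum) for `m ∈ 𝔻`, then
`A_n = Σ_{m∈𝔻, m|n} μ(n/m) B_m` for all `n ∈ 𝔻`. -/
theorem modified_moebius_inversion (b B : ℕ) (hb : 2 ≤ b) (hbB : b ∣ B)
    (A : ℚ → ℂ)
    (hfin : ∀ m ∈ Dset b B, {n | n ∈ Dset b B ∧ qdvd n m ∧ A n ≠ 0}.Finite) :
    ∀ n ∈ Dset b B,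
      A n = ∑ᶠ m ∈ {m | m ∈ Dset b B ∧ qdvd m n},
        ((ArithmeticFunction.moebius ((n / m).num.toNat) : ℤ) : ℂ) *
          (∑ᶠ l ∈ {l | l ∈ Dset b B ∧ qdvd l m}, A l) := by
  classical
  intro n hn
  have hn0 : (0:ℚ) < n := ((mem_Dset_iff hb hbB).mp hn).1
  have hnne : n ≠ 0 := ne_of_gt hn0
  have hSfin : {l | l ∈ Dset b B ∧ qdvd l n ∧ A l ≠ 0}.Finite := hfin n hn
  set Sf : Finset ℚ := hSfin.toFinset with hSfdef
  have hSf : ∀ l : ℚ, l ∈ Sf ↔ (l ∈ Dset b B ∧ qdvd l n ∧ A l ≠ 0) := fun l =>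
    hSfin.mem_toFinset
  have hpos : ∀ q : ℚ, q ∈ Dset b B → q ≠ 0 := fun q hq =>
    ne_of_gt ((mem_Dset_iff hb hbB).mp hq).1
  set K : ℚ → ℕ := fun m => (n / m).num.toNat with hKdef
  have hKspec : ∀ m : ℚ, m ≠ 0 → qdvd m n → (0 < K m ∧ n = m * (K m : ℚ)) := by
    rintro m hm ⟨k, hk0, hk⟩
    have h : K m = k := qdvd_key hm hk
    rw [h]; exact ⟨hk0, hk⟩
  set W : Finset ℚ := Sf.biUnion (fun l => (K l).divisors.image (fun j : ℕ => l * (j:ℚ)))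
    with hWdef
  have hWsub : ∀ m ∈ W, m ∈ Dset b B ∧ qdvd m n := by
    intro m hm
    rw [hWdef, Finset.mem_biUnion] at hm
    obtain ⟨l, hlSf, hm⟩ := hm
    rw [Finset.mem_image] at hm
    obtain ⟨j, hj, rfl⟩ := hm
    obtain ⟨hlD, hln, -⟩ := (hSf l).mp hlSf
    have hl0 : l ≠ 0 := hpos l hlD
    obtain ⟨hK0, hKeq⟩ := hKspec l hl0 hln
    rw [Nat.mem_divisors] at hj
    obtain ⟨⟨d, hd⟩, hKne⟩ := hj
    have hj0 : 0 < j := Nat.pos_of_ne_zero (fun h => hKne (by rw [hd, h, Nat.zero_mul]))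
    have hd0 : 0 < d := Nat.pos_of_ne_zero (fun h => hKne (by rw [hd, h, Nat.mul_zero]))
    have hqlm : qdvd l (l * (j:ℚ)) := ⟨j, hj0, rfl⟩
    have hqmn : qdvd (l * (j:ℚ)) n := by
      refine ⟨d, hd0, ?_⟩
      rw [hKeq, hd]
      push_cast
      ring
    exact ⟨mem_Dset_between hb hbB hlD hn hqlm hqmn, hqmn⟩
  have hWof : ∀ l, l ∈ Sf → ∀ m : ℚ, qdvd l m → qdvd m n → m ∈ W := by
    intro l hlSf m hlm hmn
    obtain ⟨hlD, hln, -⟩ := (hSf l).mp hlSf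
    have hl0 : l ≠ 0 := hpos l hlD
    obtain ⟨hK0, hKeq⟩ := hKspec l hl0 hln
    obtain ⟨j, hj0, hj⟩ := hlm
    obtain ⟨k, hk0, hk⟩ := hmn
    have hjk : j * k = K l := by
      have h1 : l * ((j * k : ℕ) : ℚ) = l * (K l : ℚ) := by
        push_cast
        rw [← hKeq, hk, hj]; ring
      exact_mod_cast mul_left_cancel₀ hl0 h1
    rw [hWdef, Finset.mem_biUnion]
    refine ⟨l, hlSf, ?_⟩
    rw [Finset.mem_image]
    exact ⟨j, Nat.mem_divisors.mpr ⟨⟨k, hjk.symm⟩, by omega⟩, hj.symm⟩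
  -- Step 1: rewrite the inner finsums as finite sums
  have step1 : ∀ m ∈ {m : ℚ | m ∈ Dset b B ∧ qdvd m n},
      ((ArithmeticFunction.moebius (K m) : ℤ) : ℂ) *
        (∑ᶠ l ∈ {l | l ∈ Dset b B ∧ qdvd l m}, A l)
      = ((ArithmeticFunction.moebius (K m) : ℤ) : ℂ) *
        (∑ l ∈ Sf, if qdvd l m then A l else 0) := by
    rintro m ⟨hmD, hmn⟩
    congr 1
    rw [← Finset.sum_filter]
    apply finsum_mem_eq_sum_of_inter_support_eq
    ext l
    simp only [Set.mem_inter_iff, Set.mem_setOf_eq, Finset.coe_filter, Function.mem_support]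
    constructor
    · rintro ⟨⟨hlD, hlm⟩, hA⟩
      have hln : qdvd l n := by
        obtain ⟨j, hj0, hj⟩ := hlm
        obtain ⟨k, hk0, hk⟩ := hmn
        exact ⟨j * k, by positivity, by rw [hk, hj]; push_cast; ring⟩
      exact ⟨⟨(hSf l).mpr ⟨hlD, hln, hA⟩, hlm⟩, hA⟩
    · rintro ⟨⟨hlSf, hlm⟩, hA⟩
      exact ⟨⟨((hSf l).mp hlSf).1, hlm⟩, hA⟩
  -- Step 2: the outer finsum is a finite sum over W
  have step2 : ∑ᶠ m ∈ {m : ℚ | m ∈ Dset b B ∧ qdvd m n},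
      ((ArithmeticFunction.moebius (K m) : ℤ) : ℂ) *
        (∑ l ∈ Sf, if qdvd l m then A l else 0)
      = ∑ m ∈ W, ((ArithmeticFunction.moebius (K m) : ℤ) : ℂ) *
        (∑ l ∈ Sf, if qdvd l m then A l else 0) := by
    apply finsum_mem_eq_sum_of_inter_support_eq
    ext m
    simp only [Set.mem_inter_iff, Set.mem_setOf_eq, Finset.mem_coe, Function.mem_support]
    constructor
    · rintro ⟨⟨hmD, hmn⟩, hne⟩
      refine ⟨?_, hne⟩
      have hinner : (∑ l ∈ Sf, if qdvd l m then A l else 0) ≠ 0 := fun h =>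
        hne (by rw [h, mul_zero])
      obtain ⟨l, hlSf, hl⟩ := Finset.exists_ne_zero_of_sum_ne_zero hinner
      have hlm : qdvd l m := by
        by_contra h; rw [if_neg h] at hl; exact hl rfl
      exact hWof l hlSf m hlm hmn
    · rintro ⟨hmW, hne⟩
      exact ⟨hWsub m hmW, hne⟩
  -- Row computation
  have hrow : ∀ l ∈ Sf,
      (∑ m ∈ W, if qdvd l m then ((ArithmeticFunction.moebius (K m) : ℤ) : ℂ) * A l else 0)
      = (if l = n then 1 else 0) * A l := by
    intro l hlSf
    obtain ⟨hlD, hln, -⟩ := (hSf l).mp hlSf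
    have hl0 : l ≠ 0 := hpos l hlD
    obtain ⟨hK0, hKeq⟩ := hKspec l hl0 hln
    rw [← Finset.sum_filter]
    have hfilter : W.filter (fun m => qdvd l m)
        = (K l).divisors.image (fun j : ℕ => l * (j:ℚ)) := by
      ext m
      simp only [Finset.mem_filter, Finset.mem_image, Nat.mem_divisors]
      constructor
      · rintro ⟨hmW, hlm⟩
        obtain ⟨hmD, hmn⟩ := hWsub m hmW
        obtain ⟨j, hj0, hj⟩ := hlm
        obtain ⟨k, hk0, hk⟩ := hmn
        have hjk : j * k = K l := by
          have h1 : l * ((j * k : ℕ) : ℚ) = l * (K l : ℚ) := by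
            push_cast; rw [← hKeq, hk, hj]; ring
          exact_mod_cast mul_left_cancel₀ hl0 h1
        exact ⟨j, ⟨⟨k, hjk.symm⟩, by omega⟩, hj.symm⟩
      · rintro ⟨j, ⟨⟨d, hd⟩, hKne⟩, rfl⟩
        have hj0 : 0 < j := Nat.pos_of_ne_zero (fun h => hKne (by rw [hd, h, Nat.zero_mul]))
        have hd0 : 0 < d := Nat.pos_of_ne_zero (fun h => hKne (by rw [hd, h, Nat.mul_zero]))
        have hqlm : qdvd l (l * (j:ℚ)) := ⟨j, hj0, rfl⟩
        have hqmn : qdvd (l * (j:ℚ)) n := ⟨d, hd0, by rw [hKeq, hd]; push_cast; ring⟩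
        exact ⟨hWof l hlSf _ hqlm hqmn, hqlm⟩
    rw [hfilter,
      Finset.sum_image (fun a _ c _ h => by exact_mod_cast mul_left_cancel₀ hl0 h)]
    have hKlj : ∀ j ∈ (K l).divisors, K (l * (j:ℚ)) = K l / j := by
      intro j hj
      rw [Nat.mem_divisors] at hj
      obtain ⟨hjd, hKne⟩ := hj
      have hj0 : 0 < j := Nat.pos_of_ne_zero (fun h => hKne (by
        obtain ⟨d, hd⟩ := hjd; rw [hd, h, Nat.zero_mul]))
      have hlj0 : l * (j:ℚ) ≠ 0 := by
        have : ((j:ℚ)) ≠ 0 := by exact_mod_cast hj0.ne'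
        exact mul_ne_zero hl0 this
      apply qdvd_key hlj0
      have h2 : (K l : ℚ) = ((j * (K l / j) : ℕ) : ℚ) := by
        rw [Nat.mul_div_cancel' hjd]
      rw [hKeq, h2]; push_cast; ring
    rw [Finset.sum_congr rfl (fun j hj => by rw [hKlj j hj])]
    rw [← Finset.sum_mul]
    congr 1
    have h1 : (∑ j ∈ (K l).divisors, ((ArithmeticFunction.moebius (K l / j) : ℤ) : ℂ))
        = (((∑ j ∈ (K l).divisors, (ArithmeticFunction.moebius (K l / j) : ℤ)) : ℤ) : ℂ) := by
      push_cast; rfl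
    rw [h1, Nat.sum_div_divisors, sum_moebius_div]
    have hiff : (K l = 1) ↔ (l = n) := by
      constructor
      · intro h
        rw [h] at hKeq
        simpa using hKeq.symm
      · rintro rfl
        have h1 : l * ((1:ℕ) : ℚ) = l * (K l : ℚ) := by
          push_cast; rw [← hKeq]; ring
        exact_mod_cast (mul_left_cancel₀ hl0 h1).symm
    by_cases h : K l = 1
    · rw [if_pos h, if_pos (hiff.mp h)]; norm_num
    · rw [if_neg h, if_neg (fun hc => h (hiff.mpr hc))]; norm_num
  -- Assemble
  symm
  calc ∑ᶠ m ∈ {m : ℚ | m ∈ Dset b B ∧ qdvd m n},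
        ((ArithmeticFunction.moebius ((n / m).num.toNat) : ℤ) : ℂ) *
          (∑ᶠ l ∈ {l | l ∈ Dset b B ∧ qdvd l m}, A l)
      = ∑ᶠ m ∈ {m : ℚ | m ∈ Dset b B ∧ qdvd m n},
        ((ArithmeticFunction.moebius (K m) : ℤ) : ℂ) *
          (∑ l ∈ Sf, if qdvd l m then A l else 0) := finsum_mem_congr rfl step1
    _ = ∑ m ∈ W, ((ArithmeticFunction.moebius (K m) : ℤ) : ℂ) *
          (∑ l ∈ Sf, if qdvd l m then A l else 0) := step2
    _ = ∑ m ∈ W, ∑ l ∈ Sf,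
          if qdvd l m then ((ArithmeticFunction.moebius (K m) : ℤ) : ℂ) * A l else 0 := by
        refine Finset.sum_congr rfl (fun m _ => ?_)
        rw [Finset.mul_sum]
        refine Finset.sum_congr rfl (fun l _ => ?_)
        rw [mul_ite, mul_zero]
    _ = ∑ l ∈ Sf, ∑ m ∈ W,
          if qdvd l m then ((ArithmeticFunction.moebius (K m) : ℤ) : ℂ) * A l else 0 :=
        Finset.sum_comm
    _ = ∑ l ∈ Sf, (if l = n then 1 else 0) * A l := Finset.sum_congr rfl hrow
    _ = A n := by
        have : ∀ l ∈ Sf, (if l = n then (1:ℂ) else 0) * A l = if l = n then A l else 0 := by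
          intro l _
          by_cases h : l = n
          · rw [if_pos h, if_pos h, one_mul]
          · rw [if_neg h, if_neg h, zero_mul]
        rw [Finset.sum_congr rfl this, Finset.sum_ite_eq' Sf n A]
        by_cases hA : A n = 0
        · rw [hA]; simp
        · rw [if_pos ((hSf n).mpr ⟨hn, ⟨1, Nat.one_pos, by norm_num⟩, hA⟩)]
end
end

section
/- For positive integers a, d, let ⟨a|d⟩ = ∏_{p | gcd(a,d)} p^{ord_p(a)}. Then the cyclotomic polynomial satisfies Φ_d(x^a) = ∏_{f : d·⟨a|d⟩ ∣ f ∣ a·d} Φ_f(x), where Φ_n(x) = ∏_{u∈(ℤ/nℤ)^*} (1 − e^{2πiu/n} x). -/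
noncomputable section

open Polynomial

/-- The cyclotomic polynomial of order `n`, normalized so that `Φ_n(0) = 1`:
`Φ_n(x) = ∏_{ζ primitive n-th root of unity} (1 − ζx)`. -/
def Phi (n : ℕ) : Polynomial ℂ :=
  ∏ ζ ∈ primitiveRoots n ℂ, (1 - Polynomial.C ζ * Polynomial.X)

/-- `⟨a|d⟩ = ∏_{p ∣ gcd(a,d)} p^{ord_p(a)}`. -/
def bracket (a d : ℕ) : ℕ :=
  ∏ p ∈ (Nat.gcd a d).primeFactors, p ^ (a.factorization p)

lemma bracket_ne_zero (a d : ℕ) : bracket a d ≠ 0 := by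
  apply Finset.prod_ne_zero_iff.2
  intro p hp
  exact pow_ne_zero _ (Nat.Prime.ne_zero (Nat.prime_of_mem_primeFactors hp))

lemma bracket_factorization (a d q : ℕ) :
    (bracket a d).factorization q =
      if q ∈ (Nat.gcd a d).primeFactors then a.factorization q else 0 := by
  unfold bracket
  rw [Nat.factorization_prod (fun p hp => pow_ne_zero _
    (Nat.Prime.ne_zero (Nat.prime_of_mem_primeFactors hp)))]
  rw [Finsupp.finset_sum_apply]
  split_ifs with h
  · rw [Finset.sum_eq_single q]
    · rw [(Nat.prime_of_mem_primeFactors h).factorization_pow, Finsupp.single_eq_same]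
    · intro p hp hpq
      rw [(Nat.prime_of_mem_primeFactors hp).factorization_pow, Finsupp.single_eq_of_ne' hpq]
    · intro h'; exact absurd h h'
  · apply Finset.sum_eq_zero
    intro p hp
    rw [(Nat.prime_of_mem_primeFactors hp).factorization_pow,
      Finsupp.single_eq_of_ne' (fun hpq => h (by rwa [hpq] at hp))]

lemma key_arith (a d f : ℕ) (ha : 0 < a) (hd : 0 < d) (hf : 0 < f) (hfad : f ∣ a * d) :
    d * bracket a d ∣ f ↔ f = d * Nat.gcd f a := by
  have hB := bracket_ne_zero a d
  have hga : Nat.gcd f a ≠ 0 := Nat.gcd_ne_zero_right ha.ne'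
  have hdB : d * bracket a d ≠ 0 := Nat.mul_ne_zero hd.ne' hB
  have hdg : d * Nat.gcd f a ≠ 0 := Nat.mul_ne_zero hd.ne' hga
  -- valuation of f ≤ valuation of a + valuation of d
  have hfad' : ∀ q, f.factorization q ≤ a.factorization q + d.factorization q := by
    intro q
    have := (Nat.factorization_le_iff_dvd hf.ne' (Nat.mul_ne_zero ha.ne' hd.ne')).2 hfad
    have := (Finsupp.le_def.1 this) q
    rwa [Nat.factorization_mul ha.ne' hd.ne', Finsupp.add_apply] at this
  have hfg : ∀ q, (d * Nat.gcd f a).factorization q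
      = d.factorization q + min (f.factorization q) (a.factorization q) := by
    intro q
    rw [Nat.factorization_mul hd.ne' hga, Finsupp.add_apply,
      Nat.factorization_gcd hf.ne' ha.ne', Finsupp.inf_apply]
  have hnotmem : ∀ q, q ∉ (Nat.gcd a d).primeFactors →
      a.factorization q = 0 ∨ d.factorization q = 0 := by
    intro q hq
    by_cases hp : q.Prime
    · have : ¬ q ∣ Nat.gcd a d := by
        intro hdvd
        exact hq (Nat.mem_primeFactors.2 ⟨hp, hdvd, Nat.gcd_ne_zero_left ha.ne'⟩)
      rcases Decidable.not_and_iff_or_not.1 (fun hc => this (Nat.dvd_gcd hc.1 hc.2)) with h | h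
      · exact Or.inl (Nat.factorization_eq_zero_of_not_dvd h)
      · exact Or.inr (Nat.factorization_eq_zero_of_not_dvd h)
    · exact Or.inl (Nat.factorization_eq_zero_of_not_prime a hp)
  have hdBf : ∀ q, (d * bracket a d).factorization q
      = d.factorization q + (if q ∈ (Nat.gcd a d).primeFactors then a.factorization q else 0) := by
    intro q
    rw [Nat.factorization_mul hd.ne' hB, Finsupp.add_apply, bracket_factorization]
  constructor
  · intro h
    have hle := Finsupp.le_def.1 ((Nat.factorization_le_iff_dvd hdB hf.ne').2 h)
    apply Nat.dvd_antisymm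
    · rw [← Nat.factorization_le_iff_dvd hf.ne' hdg]
      apply Finsupp.le_def.2
      intro q
      rw [hfg q]
      rcases le_total (f.factorization q) (a.factorization q) with h1 | h1
      · rw [min_eq_left h1]; omega
      · rw [min_eq_right h1]
        have := hfad' q; omega
    · rw [← Nat.factorization_le_iff_dvd hdg hf.ne']
      apply Finsupp.le_def.2
      intro q
      rw [hfg q]
      have hq := hle q
      rw [hdBf q] at hq
      split_ifs at hq with hmem
      · -- q divides both a and d
        have hqd : q.Prime ∧ q ∣ d := by
          have h1 := Nat.mem_primeFactors.1 hmem
          exact ⟨h1.1, (Nat.dvd_gcd_iff.1 h1.2.1).2⟩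
        have hdpos : 0 < d.factorization q :=
          (Nat.Prime.factorization_pos_of_dvd hqd.1 hd.ne' hqd.2)
        rcases le_total (f.factorization q) (a.factorization q) with h1 | h1 <;>
          [rw [min_eq_left h1]; rw [min_eq_right h1]] <;> omega
      · have h2 := hfad' q
        have h3 := hnotmem q hmem
        rcases le_total (f.factorization q) (a.factorization q) with h1 | h1 <;>
          [rw [min_eq_left h1]; rw [min_eq_right h1]] <;> omega
  · intro h
    rw [← Nat.factorization_le_iff_dvd hdB hf.ne']
    apply Finsupp.le_def.2
    intro q
    rw [hdBf q]
    have hq : f.factorization q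
        = d.factorization q + min (f.factorization q) (a.factorization q) := by
      conv_lhs => rw [h]
      rw [hfg q]
    split_ifs with hmem
    · have h1 := Nat.mem_primeFactors.1 hmem
      have hdpos : 0 < d.factorization q :=
        Nat.Prime.factorization_pos_of_dvd h1.1 hd.ne' (Nat.dvd_gcd_iff.1 h1.2.1).2
      rcases le_total (f.factorization q) (a.factorization q) with h2 | h2 <;>
        [rw [min_eq_left h2] at hq; rw [min_eq_right h2] at hq] <;> omega
    · rcases le_total (f.factorization q) (a.factorization q) with h2 | h2 <;>
        [rw [min_eq_left h2] at hq; rw [min_eq_right h2] at hq] <;> omega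

-- the primitive-root equivalence
lemma prim_equiv (a d : ℕ) (ha : 0 < a) (hd : 0 < d) (ω : ℂ) :
    (∃ f ∈ (a * d).divisors.filter (fun f => d * bracket a d ∣ f), IsPrimitiveRoot ω f)
      ↔ IsPrimitiveRoot (ω ^ a) d := by
  constructor
  · rintro ⟨f, hf, hω⟩
    rw [Finset.mem_filter, Nat.mem_divisors] at hf
    obtain ⟨⟨hfad, had⟩, hdvd⟩ := hf
    have hfpos : 0 < f := Nat.pos_of_dvd_of_pos hfad (Nat.pos_of_ne_zero had)
    have heq : f = d * Nat.gcd f a := (key_arith a d f ha hd hfpos hfad).1 hdvd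
    have hford : f = orderOf ω := hω.eq_orderOf
    have hord : orderOf (ω ^ a) = d := by
      rw [orderOf_pow' ω ha.ne', ← hford]
      exact Nat.div_eq_of_eq_mul_left (Nat.gcd_pos_of_pos_left a hfpos) heq
    exact hord ▸ IsPrimitiveRoot.orderOf (ω ^ a)
  · intro h
    have hfin : IsOfFinOrder ω :=
      isOfFinOrder_iff_pow_eq_one.2 ⟨a * d, by positivity, by rw [pow_mul]; exact h.pow_eq_one⟩
    set f := orderOf ω with hford
    have hfpos : 0 < f := hfin.orderOf_pos
    have hd' : d = f / Nat.gcd f a := by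
      rw [h.eq_orderOf, orderOf_pow' ω ha.ne']
    have heq : f = d * Nat.gcd f a := by
      rw [hd', Nat.div_mul_cancel (Nat.gcd_dvd_left f a)]
    have hfad : f ∣ a * d := by
      rw [heq, mul_comm a d]
      exact Nat.mul_dvd_mul_left d (Nat.gcd_dvd_right f a)
    refine ⟨f, ?_, IsPrimitiveRoot.orderOf ω⟩
    rw [Finset.mem_filter, Nat.mem_divisors]
    exact ⟨⟨hfad, by positivity⟩, (key_arith a d f ha hd hfpos hfad).2 heq⟩

-- reverse of a finset product
lemma reverse_finset_prod {ι : Type*} (s : Finset ι) (g : ι → Polynomial ℂ) :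
    (∏ i ∈ s, g i).reverse = ∏ i ∈ s, (g i).reverse := by
  induction s using Finset.cons_induction with
  | empty =>
      rw [Finset.prod_empty, Finset.prod_empty, ← Polynomial.C_1, Polynomial.reverse_C]
  | cons i s his ih =>
      rw [Finset.prod_cons, Finset.prod_cons, Polynomial.reverse_mul_of_domain, ih]

lemma reverse_X_pow_sub_C (a : ℕ) (ha : a ≠ 0) (c : ℂ) :
    (X ^ a - C c : Polynomial ℂ).reverse = 1 - C c * X ^ a := by
  unfold Polynomial.reverse
  rw [natDegree_X_pow_sub_C, Polynomial.reflect_sub, Polynomial.reflect_monomial,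
    Polynomial.reflect_C, revAt_le (le_refl a), Nat.sub_self, pow_zero]

lemma Phi_eq_reverse (n : ℕ) (hn : n ≠ 0) : Phi n = (cyclotomic n ℂ).reverse := by
  obtain hζ := Complex.isPrimitiveRoot_exp n hn
  rw [cyclotomic_eq_prod_X_sub_primitiveRoots hζ, reverse_finset_prod]
  refine Finset.prod_congr rfl fun μ _ => ?_
  rw [show (X - C μ : Polynomial ℂ) = X ^ 1 - C μ by rw [pow_one],
    reverse_X_pow_sub_C 1 one_ne_zero, pow_one]

-- the core identity for (monic) cyclotomic polynomials
lemma cyclotomic_comp_X_pow (a d : ℕ) (ha : 0 < a) (hd : 0 < d) :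
    (cyclotomic d ℂ).comp (X ^ a) =
      ∏ f ∈ (a * d).divisors.filter (fun f => d * bracket a d ∣ f), cyclotomic f ℂ := by
  set T := (a * d).divisors.filter (fun f => d * bracket a d ∣ f) with hT
  have hn : a * d ≠ 0 := by positivity
  set P := (cyclotomic d ℂ).comp (X ^ a) with hP
  set Q := ∏ f ∈ T, cyclotomic f ℂ with hQ
  have hsep : (X ^ (a * d) - 1 : Polynomial ℂ).Separable := by
    have := Polynomial.separable_X_pow_sub_C (1 : ℂ) (Nat.cast_ne_zero.2 hn) one_ne_zero
    simpa using this
  have hPdvd : P ∣ X ^ (a * d) - 1 := by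
    have h1 : cyclotomic d ℂ ∣ X ^ d - 1 := cyclotomic.dvd_X_pow_sub_one d ℂ
    have h2 := map_dvd (Polynomial.aeval (X ^ a : Polynomial ℂ)) h1
    rw [← comp_eq_aeval, ← comp_eq_aeval] at h2
    simpa [sub_comp, pow_comp, X_comp, one_comp, ← pow_mul] using h2
  have hQdvd : Q ∣ X ^ (a * d) - 1 := by
    rw [← prod_cyclotomic_eq_X_pow_sub_one (Nat.pos_of_ne_zero hn) ℂ]
    exact Finset.prod_dvd_prod_of_subset _ _ _ (Finset.filter_subset _ _)
  have hPmonic : P.Monic :=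
    (cyclotomic.monic d ℂ).comp (monic_X_pow a) (by simpa using ha.ne')
  have hQmonic : Q.Monic :=
    monic_prod_of_monic _ _ fun f _ => cyclotomic.monic f ℂ
  have hroots : P.roots = Q.roots := by
    rw [Multiset.Nodup.ext (nodup_roots (hsep.of_dvd hPdvd)) (nodup_roots (hsep.of_dvd hQdvd))]
    intro ω
    rw [Polynomial.mem_roots hPmonic.ne_zero, Polynomial.mem_roots hQmonic.ne_zero]
    have hPev : P.IsRoot ω ↔ IsPrimitiveRoot (ω ^ a) d := by
      haveI : NeZero ((d : ℂ)) := ⟨Nat.cast_ne_zero.2 hd.ne'⟩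
      rw [Polynomial.IsRoot, hP, eval_comp, eval_pow, eval_X, ← Polynomial.IsRoot,
        isRoot_cyclotomic_iff]
    have hQev : Q.IsRoot ω ↔ ∃ f ∈ T, IsPrimitiveRoot ω f := by
      rw [Polynomial.IsRoot, hQ, eval_prod, Finset.prod_eq_zero_iff]
      constructor
      · rintro ⟨f, hf, hev⟩
        haveI : NeZero ((f : ℂ)) := ⟨Nat.cast_ne_zero.2
          (Nat.pos_of_mem_divisors (Finset.mem_filter.1 hf).1).ne'⟩
        exact ⟨f, hf, isRoot_cyclotomic_iff.1 hev⟩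
      · rintro ⟨f, hf, hprim⟩
        haveI : NeZero ((f : ℂ)) := ⟨Nat.cast_ne_zero.2
          (Nat.pos_of_mem_divisors (Finset.mem_filter.1 hf).1).ne'⟩
        exact ⟨f, hf, isRoot_cyclotomic_iff.2 hprim⟩
    rw [hPev, hQev, prim_equiv a d ha hd ω]
  calc P = (Multiset.map (fun r => X - C r) P.roots).prod :=
        (IsAlgClosed.splits P).eq_prod_roots_of_monic hPmonic
    _ = (Multiset.map (fun r => X - C r) Q.roots).prod := by rw [hroots]
    _ = Q := ((IsAlgClosed.splits Q).eq_prod_roots_of_monic hQmonic).symm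

/-- `Φ_d(x^a) = ∏_{f : d⟨a|d⟩ ∣ f ∣ ad} Φ_f(x)`. -/
theorem Phi_comp_X_pow (a d : ℕ) (ha : 0 < a) (hd : 0 < d) :
    (Phi d).comp (Polynomial.X ^ a) =
      ∏ f ∈ (a * d).divisors.filter (fun f => d * bracket a d ∣ f), Phi f := by
  obtain hζ := Complex.isPrimitiveRoot_exp d hd.ne'
  have key := cyclotomic_comp_X_pow a d ha hd
  have h1 : (Phi d).comp (Polynomial.X ^ a)
      = ∏ μ ∈ primitiveRoots d ℂ, (1 - C μ * X ^ a) := by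
    rw [Phi, comp_eq_aeval, map_prod]
    refine Finset.prod_congr rfl fun μ _ => ?_
    rw [← comp_eq_aeval]
    simp [sub_comp, mul_comp]
  have h2 : ((cyclotomic d ℂ).comp (X ^ a)).reverse
      = ∏ μ ∈ primitiveRoots d ℂ, (1 - C μ * X ^ a) := by
    rw [cyclotomic_eq_prod_X_sub_primitiveRoots hζ, comp_eq_aeval, map_prod]
    simp_rw [← comp_eq_aeval, sub_comp, X_comp, C_comp]
    rw [reverse_finset_prod]
    exact Finset.prod_congr rfl fun μ _ => by rw [reverse_X_pow_sub_C a ha.ne']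
  rw [h1, ← h2, key, reverse_finset_prod]
  refine Finset.prod_congr rfl fun f hf => ?_
  exact (Phi_eq_reverse f (Nat.pos_of_mem_divisors (Finset.mem_filter.1 hf).1).ne').symm
end
end

section
/- Let g(x) = ∏_{d∈ℕ} Φ_d(x)^{h_d} with h_d ∈ ℚ and h_d = 0 for all large d, and let a be a positive integer. Then g(x^a) = ∏_{f∈ℕ} Φ_f(x)^{h_{[f/a]}}, where for a positive rational y, [y] = ∏_{ord_p(y)>0} p^{ord_p(y)}. -/
noncomputable section

open Polynomial

/-- The generalized binomial coefficient `C(μ, k)` for `μ ∈ ℂ`. -/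
def cchoose (μ : ℂ) (k : ℕ) : ℂ :=
  (∏ i ∈ Finset.range k, (μ - (i : ℂ))) / (k.factorial : ℂ)

/-- `F^μ` for a power series `F` with constant term `1` and `μ ∈ ℂ`, defined
by the binomial series `Σ_k C(μ,k) (F−1)^k` (coefficientwise a finite sum). -/
def cpowPS (F : PowerSeries ℂ) (μ : ℂ) : PowerSeries ℂ :=
  PowerSeries.mk fun j => ∑ᶠ k : ℕ, cchoose μ k * PowerSeries.coeff j ((F - 1) ^ k)

/-- Substitution `x ↦ x^a` on power series. -/
def substPow (a : ℕ) (F : PowerSeries ℂ) : PowerSeries ℂ :=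
  PowerSeries.mk fun j => if a ∣ j then PowerSeries.coeff (j / a) F else 0

/-- For a positive rational `y`, `[y] = ∏_{ord_p(y)>0} p^{ord_p(y)}`, i.e. the
numerator of `y` in lowest terms. -/
def numPart (y : ℚ) : ℕ := y.num.toNat

namespace SPaux

lemma substPow_one (a : ℕ) (ha : 0 < a) : substPow a 1 = 1 := by
  ext j
  simp only [substPow, PowerSeries.coeff_mk, PowerSeries.coeff_one]
  rcases eq_or_ne j 0 with rfl | hj
  · simp
  · rw [if_neg hj]
    by_cases hd : a ∣ j
    · rw [if_pos hd, if_neg]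
      intro hc
      obtain ⟨c, rfl⟩ := hd
      rw [Nat.mul_div_cancel_left c ha] at hc
      exact hj (by simp [hc])
    · exact if_neg hd

lemma substPow_mul (a : ℕ) (ha : 0 < a) (F G : PowerSeries ℂ) :
    substPow a (F * G) = substPow a F * substPow a G := by
  ext j
  rw [PowerSeries.coeff_mul]
  simp only [substPow, PowerSeries.coeff_mk]
  rw [Finset.Nat.sum_antidiagonal_eq_sum_range_succ_mk]
  by_cases hdvd : a ∣ j
  · obtain ⟨j', rfl⟩ := hdvd
    rw [if_pos (Dvd.intro j' rfl), Nat.mul_div_cancel_left j' ha, PowerSeries.coeff_mul,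
      Finset.Nat.sum_antidiagonal_eq_sum_range_succ_mk]
    conv_rhs => rw [← Finset.sum_filter_of_ne (p := fun p => a ∣ p)
      (fun p _ hne => by
        by_contra hp
        simp [hp] at hne)]
    refine (Finset.sum_bij' (fun p (_ : p ∈ (Finset.range (a * j' + 1)).filter (a ∣ ·)) => p / a)
      (fun q (_ : q ∈ Finset.range (j' + 1)) => a * q) ?_ ?_ ?_ ?_ ?_).symm
    · intro p hp
      simp only [Finset.mem_filter, Finset.mem_range] at hp
      simp only [Finset.mem_range]
      obtain ⟨hlt, p', rfl⟩ := hp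
      rw [Nat.mul_div_cancel_left p' ha]
      by_contra hc
      push_neg at hc
      have : a * j' < a * p' := (Nat.mul_lt_mul_left ha).mpr (by omega)
      omega
    · intro q hq
      simp only [Finset.mem_range] at hq
      simp only [Finset.mem_filter, Finset.mem_range]
      refine ⟨?_, Dvd.intro q rfl⟩
      have := Nat.mul_le_mul_left a (show q ≤ j' by omega)
      omega
    · intro p hp
      simp only [Finset.mem_filter, Finset.mem_range] at hp
      exact Nat.mul_div_cancel' hp.2
    · intro q _
      exact Nat.mul_div_cancel_left q ha
    · intro p hp
      simp only [Finset.mem_filter, Finset.mem_range] at hp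
      obtain ⟨hlt, p', rfl⟩ := hp
      have hsub : a * j' - a * p' = a * (j' - p') := by
        rw [Nat.mul_sub]
      dsimp only
      rw [Nat.mul_div_cancel_left p' ha, if_pos (Dvd.intro p' rfl), hsub,
        if_pos (Dvd.intro (j' - p') rfl), Nat.mul_div_cancel_left _ ha]
  · rw [if_neg hdvd]
    refine (Finset.sum_eq_zero ?_).symm
    intro p hp
    simp only [Finset.mem_range] at hp
    by_cases hpd : a ∣ p
    · have hq : ¬ a ∣ (j - p) := by
        intro hc
        apply hdvd
        have hj : j = p + (j - p) := by omega
        rw [hj]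
        exact dvd_add hpd hc
      rw [if_neg hq, mul_zero]
    · rw [if_neg hpd, zero_mul]

lemma substPow_add (a : ℕ) (F G : PowerSeries ℂ) :
    substPow a (F + G) = substPow a F + substPow a G := by
  ext j
  simp only [substPow, PowerSeries.coeff_mk, map_add]
  split_ifs <;> simp

def substHom (a : ℕ) (ha : 0 < a) : PowerSeries ℂ →+* PowerSeries ℂ where
  toFun := substPow a
  map_one' := substPow_one a ha
  map_mul' := substPow_mul a ha
  map_zero' := by ext j; simp [substPow]
  map_add' := substPow_add a


-- continuation scratch
lemma cchoose_zero (μ : ℂ) : cchoose μ 0 = 1 := by simp [cchoose]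

lemma cchoose_zero' (k : ℕ) (hk : k ≠ 0) : cchoose 0 k = 0 := by
  rw [cchoose, Finset.prod_eq_zero (Finset.mem_range.2 (Nat.pos_of_ne_zero hk)) (by simp),
    zero_div]

lemma prod_range_natCast (m k : ℕ) :
    (∏ i ∈ Finset.range k, ((m : ℂ) - (i : ℂ))) = (m.descFactorial k : ℂ) := by
  induction k with
  | zero => simp
  | succ k ih =>
    rw [Finset.prod_range_succ, ih, Nat.descFactorial_succ, Nat.cast_mul]
    by_cases hk : k ≤ m
    · rw [Nat.cast_sub hk, mul_comm]
    · have h1 : m.descFactorial k = 0 := Nat.descFactorial_eq_zero_iff_lt.2 (by omega)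
      have h2 : m - k = 0 := by omega
      rw [h1, h2]
      simp

lemma cchoose_natCast (m k : ℕ) : cchoose (m : ℂ) k = (m.choose k : ℂ) := by
  rw [cchoose, prod_range_natCast, Nat.descFactorial_eq_factorial_mul_choose, Nat.cast_mul,
    mul_div_assoc]
  rw [mul_comm]
  exact div_mul_cancel₀ _ (show ((k.factorial : ℂ)) ≠ 0 by exact_mod_cast k.factorial_ne_zero)


lemma coeff_sub_one_pow_eq_zero {F : PowerSeries ℂ} (hF : PowerSeries.constantCoeff F = 1)
    {j k : ℕ} (hjk : j < k) : PowerSeries.coeff j ((F - 1) ^ k) = 0 := by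
  have hX : (PowerSeries.X : PowerSeries ℂ) ∣ (F - 1) :=
    PowerSeries.X_dvd_iff.2 (by simp [hF])
  exact PowerSeries.X_pow_dvd_iff.1 (pow_dvd_pow_of_dvd hX k) j hjk

lemma coeff_cpowPS {F : PowerSeries ℂ} (hF : PowerSeries.constantCoeff F = 1) (μ : ℂ) (j : ℕ) :
    PowerSeries.coeff j (cpowPS F μ) =
      ∑ k ∈ Finset.range (j + 1), cchoose μ k * PowerSeries.coeff j ((F - 1) ^ k) := by
  rw [cpowPS, PowerSeries.coeff_mk]
  apply finsum_eq_sum_of_support_subset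
  intro k hk
  simp only [Function.mem_support] at hk
  simp only [Finset.coe_range, Set.mem_Iio]
  by_contra hc
  exact hk (by rw [coeff_sub_one_pow_eq_zero hF (by omega), mul_zero])

lemma cpowPS_zero (F : PowerSeries ℂ) : cpowPS F 0 = 1 := by
  ext j
  rw [cpowPS, PowerSeries.coeff_mk]
  rw [finsum_eq_single _ 0 (fun k hk => by rw [cchoose_zero' k hk, zero_mul])]
  simp [cchoose_zero]

lemma cpowPS_one (μ : ℂ) : cpowPS 1 μ = 1 := by
  ext j
  rw [cpowPS, PowerSeries.coeff_mk]
  rw [finsum_eq_single _ 0 (fun k hk => by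
    rw [sub_self, zero_pow hk, map_zero, mul_zero])]
  simp [cchoose_zero]
lemma cpowPS_natCast {F : PowerSeries ℂ} (hF : PowerSeries.constantCoeff F = 1) (m : ℕ) :
    cpowPS F (m : ℂ) = F ^ m := by
  ext j
  rw [coeff_cpowPS hF]
  have h1 : F ^ m = ∑ k ∈ Finset.range (m + 1),
      (F - 1) ^ k * PowerSeries.C ((m.choose k : ℂ)) := by
    conv_lhs => rw [show F = (F - 1) + 1 by ring, add_pow]
    refine Finset.sum_congr rfl fun k _ => ?_
    rw [one_pow, mul_one, map_natCast]
  rw [h1, map_sum]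
  have h2 : ∀ k, PowerSeries.coeff j ((F - 1) ^ k * PowerSeries.C (m.choose k : ℂ))
      = (m.choose k : ℂ) * PowerSeries.coeff j ((F - 1) ^ k) := fun k => by
    rw [PowerSeries.coeff_mul_C, mul_comm]
  simp only [h2, cchoose_natCast]
  have e1 : ∑ k ∈ Finset.range (j + 1), (m.choose k : ℂ) * PowerSeries.coeff j ((F - 1) ^ k)
      = ∑ k ∈ Finset.range (j + m + 2), (m.choose k : ℂ) * PowerSeries.coeff j ((F - 1) ^ k) := by
    apply Finset.sum_subset
    · intro x hx; simp only [Finset.mem_range] at hx ⊢; omega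
    · intro k _ hk
      simp only [Finset.mem_range] at hk
      rw [coeff_sub_one_pow_eq_zero hF (by omega), mul_zero]
  have e2 : ∑ k ∈ Finset.range (m + 1), (m.choose k : ℂ) * PowerSeries.coeff j ((F - 1) ^ k)
      = ∑ k ∈ Finset.range (j + m + 2), (m.choose k : ℂ) * PowerSeries.coeff j ((F - 1) ^ k) := by
    apply Finset.sum_subset
    · intro x hx; simp only [Finset.mem_range] at hx ⊢; omega
    · intro k _ hk
      simp only [Finset.mem_range] at hk
      rw [Nat.choose_eq_zero_of_lt (by omega), Nat.cast_zero, zero_mul]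
  rw [e1, e2]

def pch (k : ℕ) : Polynomial ℂ :=
  Polynomial.C ((k.factorial : ℂ)⁻¹) * ∏ i ∈ Finset.range k, (Polynomial.X - Polynomial.C (i : ℂ))

lemma eval_pch (μ : ℂ) (k : ℕ) : (pch k).eval μ = cchoose μ k := by
  rw [pch, cchoose, Polynomial.eval_mul, Polynomial.eval_C, Polynomial.eval_prod,
    div_eq_mul_inv, mul_comm]
  congr 1
  exact Finset.prod_congr rfl fun i _ => by rw [Polynomial.eval_sub, Polynomial.eval_X,
    Polynomial.eval_C]

def Pj (F : PowerSeries ℂ) (j : ℕ) : Polynomial ℂ :=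
  ∑ k ∈ Finset.range (j + 1), Polynomial.C (PowerSeries.coeff j ((F - 1) ^ k)) * pch k

lemma eval_Pj {F : PowerSeries ℂ} (hF : PowerSeries.constantCoeff F = 1) (j : ℕ) (μ : ℂ) :
    (Pj F j).eval μ = PowerSeries.coeff j (cpowPS F μ) := by
  rw [Pj, Polynomial.eval_finset_sum, coeff_cpowPS hF]
  exact Finset.sum_congr rfl fun k _ => by
    rw [Polynomial.eval_mul, Polynomial.eval_C, eval_pch, mul_comm]

lemma cpowPS_mul {F G : PowerSeries ℂ} (hF : PowerSeries.constantCoeff F = 1)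
    (hG : PowerSeries.constantCoeff G = 1) (μ : ℂ) :
    cpowPS (F * G) μ = cpowPS F μ * cpowPS G μ := by
  have hFG : PowerSeries.constantCoeff (F * G) = 1 := by rw [map_mul, hF, hG, one_mul]
  ext j
  have key : Pj (F * G) j = ∑ pq ∈ Finset.HasAntidiagonal.antidiagonal j, Pj F pq.1 * Pj G pq.2 := by
    apply Polynomial.eq_of_infinite_eval_eq
    apply Set.infinite_of_injective_forall_mem (f := fun m : ℕ => (m : ℂ)) Nat.cast_injective
    intro m
    simp only [Set.mem_setOf_eq, Polynomial.eval_finset_sum, Polynomial.eval_mul]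
    rw [eval_Pj hFG, cpowPS_natCast hFG, mul_pow, PowerSeries.coeff_mul]
    exact Finset.sum_congr rfl fun pq _ => by
      rw [eval_Pj hF, eval_Pj hG, cpowPS_natCast hF, cpowPS_natCast hG]
  calc PowerSeries.coeff j (cpowPS (F * G) μ) = (Pj (F * G) j).eval μ := (eval_Pj hFG j μ).symm
    _ = ∑ pq ∈ Finset.HasAntidiagonal.antidiagonal j, (Pj F pq.1).eval μ * (Pj G pq.2).eval μ := by
        rw [key, Polynomial.eval_finset_sum]
        exact Finset.sum_congr rfl fun pq _ => Polynomial.eval_mul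
    _ = PowerSeries.coeff j (cpowPS F μ * cpowPS G μ) := by
        rw [PowerSeries.coeff_mul]
        exact Finset.sum_congr rfl fun pq _ => by rw [eval_Pj hF, eval_Pj hG]

lemma cpowPS_prod {s : Finset ℕ} (P : ℕ → PowerSeries ℂ)
    (hP : ∀ i ∈ s, PowerSeries.constantCoeff (P i) = 1) (μ : ℂ) :
    cpowPS (∏ i ∈ s, P i) μ = ∏ i ∈ s, cpowPS (P i) μ := by
  classical
  induction s using Finset.induction_on with
  | empty => simpa using cpowPS_one μ
  | @insert x s hx ih =>
    rw [Finset.prod_insert hx, Finset.prod_insert hx,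
      cpowPS_mul (hP x (Finset.mem_insert_self x s))
        (by rw [map_prod]; exact Finset.prod_eq_one fun i hi => hP i (Finset.mem_insert_of_mem hi)),
      ih (fun i hi => hP i (Finset.mem_insert_of_mem hi))]

lemma substHom_apply (a : ℕ) (ha : 0 < a) (F : PowerSeries ℂ) :
    substHom a ha F = substPow a F := rfl

lemma substPow_cpowPS (a : ℕ) (ha : 0 < a) (F : PowerSeries ℂ) (μ : ℂ) :
    substPow a (cpowPS F μ) = cpowPS (substPow a F) μ := by
  have hsub : substPow a (F - 1) = substPow a F - 1 := by
    have := map_sub (substHom a ha) F 1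
    rw [substHom_apply, substHom_apply, substHom_apply, substPow_one a ha] at this
    exact this
  have h1 : ∀ k : ℕ, (substPow a F - 1) ^ k = substPow a ((F - 1) ^ k) := fun k => by
    rw [← hsub, ← substHom_apply a ha, ← map_pow, substHom_apply]
  ext j
  rw [show cpowPS (substPow a F) μ = PowerSeries.mk fun j =>
      ∑ᶠ k : ℕ, cchoose μ k * PowerSeries.coeff j (substPow a ((F - 1) ^ k)) from by
    simp only [cpowPS, h1]]
  simp only [substPow, cpowPS, PowerSeries.coeff_mk]
  by_cases hd : a ∣ j
  · simp only [hd, if_true]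
  · simp [hd]

lemma substPow_coe (a : ℕ) (ha : 0 < a) (P : Polynomial ℂ) :
    substPow a (P : PowerSeries ℂ) = ((Polynomial.expand ℂ a P : Polynomial ℂ) : PowerSeries ℂ) := by
  ext j
  simp only [substPow, PowerSeries.coeff_mk, Polynomial.coeff_coe, Polynomial.coeff_expand ha]

lemma reverse_X_pow_sub_C (a : ℕ) (ζ : ℂ) :
    (Polynomial.X ^ a - Polynomial.C ζ).reverse = 1 - Polynomial.C ζ * Polynomial.X ^ a := by
  rw [Polynomial.reverse, Polynomial.natDegree_X_pow_sub_C, Polynomial.reflect_sub,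
    Polynomial.reflect_monomial, Polynomial.reflect_C, Polynomial.revAt_le (le_refl a),
    Nat.sub_self, pow_zero]

lemma reverse_multiset_prod (M : Multiset (Polynomial ℂ)) :
    M.prod.reverse = (M.map Polynomial.reverse).prod := by
  induction M using Multiset.induction_on with
  | empty =>
    have h1 : Polynomial.reverse (Polynomial.C (1 : ℂ)) = Polynomial.C 1 := Polynomial.reverse_C 1
    simpa using h1
  | cons x s ih =>
    rw [Multiset.map_cons, Multiset.prod_cons, Multiset.prod_cons,
      Polynomial.reverse_mul_of_domain, ih]

lemma factor_one_sub (a : ℕ) (ha : 0 < a) (ζ : ℂ) (hζ : ζ ≠ 0) :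
    ((Polynomial.nthRoots a ζ).map fun ω => 1 - Polynomial.C ω * Polynomial.X).prod
      = 1 - Polynomial.C ζ * Polynomial.X ^ a := by
  have hη := Complex.isPrimitiveRoot_exp a ha.ne'
  have hcard : Multiset.card (Polynomial.nthRoots a ζ) = a := by
    rw [hη.card_nthRoots ζ, if_pos (IsAlgClosed.exists_pow_nat_eq ζ ha)]
  have hmonic : (Polynomial.X ^ a - Polynomial.C ζ).Monic :=
    Polynomial.monic_X_pow_sub_C ζ ha.ne'
  have hfact := Polynomial.C_leadingCoeff_mul_prod_multiset_X_sub_C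
    (p := Polynomial.X ^ a - Polynomial.C ζ)
    (by rw [Polynomial.natDegree_X_pow_sub_C]; exact hcard)
  rw [hmonic.leadingCoeff, Polynomial.C_1, one_mul] at hfact
  have h2 := congrArg Polynomial.reverse hfact
  rw [reverse_multiset_prod, reverse_X_pow_sub_C, Multiset.map_map] at h2
  calc ((Polynomial.nthRoots a ζ).map fun ω => 1 - Polynomial.C ω * Polynomial.X).prod
      = (((Polynomial.X ^ a - Polynomial.C ζ).roots).map
          (Polynomial.reverse ∘ fun ω => Polynomial.X - Polynomial.C ω)).prod := by
        apply congrArg Multiset.prod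
        apply Multiset.map_congr rfl
        intro ω _
        simp only [Function.comp_apply]
        rw [show Polynomial.X - Polynomial.C ω
            = Polynomial.X ^ 1 - Polynomial.C ω from by rw [pow_one],
          reverse_X_pow_sub_C, pow_one]
    _ = 1 - Polynomial.C ζ * Polynomial.X ^ a := h2

lemma prim_pow (a : ℕ) (f : ℕ) (hf : 0 < f) (ω : ℂ) (hω : IsPrimitiveRoot ω f) :
    IsPrimitiveRoot (ω ^ a) (f / f.gcd a) := by
  have hgpos : 0 < f.gcd a := Nat.gcd_pos_of_pos_left a hf
  have h1 : IsPrimitiveRoot (ω ^ f.gcd a) (f / f.gcd a) :=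
    hω.pow hf (Nat.mul_div_cancel' (Nat.gcd_dvd_left f a)).symm
  have h2 := h1.pow_of_coprime (a / f.gcd a) (Nat.coprime_div_gcd_div_gcd hgpos).symm
  rwa [← pow_mul, Nat.mul_div_cancel' (Nat.gcd_dvd_right f a)] at h2

lemma key_cyclo (a : ℕ) (ha : 0 < a) (d : ℕ) (hd : 0 < d) (s : Finset ℕ)
    (hs : ∀ f : ℕ, f ∈ s ↔ 0 < f ∧ f / f.gcd a = d) :
    Polynomial.expand ℂ a (Phi d) = ∏ f ∈ s, Phi f := by
  classical
  have hη := Complex.isPrimitiveRoot_exp a ha.ne'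
  have hnd : ∀ ζ : ℂ, ζ ≠ 0 → (Polynomial.nthRoots a ζ).Nodup :=
    fun ζ hζ => hη.nthRoots_nodup hζ
  have hne : ∀ ζ : ℂ, ζ ∈ primitiveRoots d ℂ → ζ ≠ 0 := fun ζ hζ =>
    ((mem_primitiveRoots hd).1 hζ).ne_zero hd.ne'
  have tprod : ∀ ζ : ℂ, ζ ≠ 0 →
      ∏ ω ∈ (Polynomial.nthRoots a ζ).toFinset, (1 - Polynomial.C ω * Polynomial.X)
        = ((Polynomial.nthRoots a ζ).map fun ω => 1 - Polynomial.C ω * Polynomial.X).prod := by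
    intro ζ hζ
    rw [Finset.prod_eq_multiset_prod, Multiset.toFinset_val,
      Multiset.dedup_eq_self.2 (hnd ζ hζ)]
  have lhs1 : Polynomial.expand ℂ a (Phi d) =
      ∏ ζ ∈ primitiveRoots d ℂ, (1 - Polynomial.C ζ * Polynomial.X ^ a) := by
    rw [Phi, map_prod]
    exact Finset.prod_congr rfl fun ζ _ => by
      rw [map_sub, map_one, map_mul, Polynomial.expand_C, Polynomial.expand_X]
  have lhs2 : ∀ ζ ∈ primitiveRoots d ℂ, (1 : Polynomial ℂ) - Polynomial.C ζ * Polynomial.X ^ a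
      = ∏ ω ∈ (Polynomial.nthRoots a ζ).toFinset, (1 - Polynomial.C ω * Polynomial.X) := by
    intro ζ hζ
    rw [tprod ζ (hne ζ hζ), factor_one_sub a ha ζ (hne ζ hζ)]
  have hdisj1 : Set.PairwiseDisjoint ((primitiveRoots d ℂ : Finset ℂ) : Set ℂ)
      (fun ζ => (Polynomial.nthRoots a ζ).toFinset) := by
    intro ζ₁ _ ζ₂ _ hne12
    simp only [Function.onFun]
    rw [Finset.disjoint_left]
    intro ω h1 h2
    rw [Multiset.mem_toFinset, Polynomial.mem_nthRoots ha] at h1 h2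
    exact hne12 (h1 ▸ h2)
  have hdisj2 : Set.PairwiseDisjoint ((s : Finset ℕ) : Set ℕ) (fun f => primitiveRoots f ℂ) := by
    intro f₁ hf₁ f₂ hf₂ hne12
    simp only [Function.onFun]
    rw [Finset.disjoint_left]
    intro ω h1 h2
    have hp1 : 0 < f₁ := ((hs f₁).1 hf₁).1
    have hp2 : 0 < f₂ := ((hs f₂).1 hf₂).1
    exact hne12 (((mem_primitiveRoots hp1).1 h1).unique ((mem_primitiveRoots hp2).1 h2))
  have rhs1 : ∏ f ∈ s, Phi f = ∏ ω ∈ s.biUnion (fun f => primitiveRoots f ℂ),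
      (1 - Polynomial.C ω * Polynomial.X) := by rw [Finset.prod_biUnion hdisj2]; rfl
  rw [lhs1, Finset.prod_congr rfl lhs2, ← Finset.prod_biUnion hdisj1, rhs1]
  · congr 1
    apply Finset.ext
    intro ω
    simp only [Finset.mem_biUnion, Multiset.mem_toFinset]
    constructor
    · rintro ⟨ζ, hζ, hω⟩
      have hζp := (mem_primitiveRoots hd).1 hζ
      rw [Polynomial.mem_nthRoots ha] at hω
      rw [← hω] at hζp
      have hfin : IsOfFinOrder ω := isOfFinOrder_iff_pow_eq_one.2
        ⟨a * d, by positivity, by rw [pow_mul, hζp.pow_eq_one]⟩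
      have hfp : 0 < orderOf ω := hfin.orderOf_pos
      have hwf : IsPrimitiveRoot ω (orderOf ω) := IsPrimitiveRoot.orderOf ω
      have huniq : orderOf ω / (orderOf ω).gcd a = d :=
        (prim_pow a (orderOf ω) hfp ω hwf).unique hζp
      exact ⟨orderOf ω, (hs _).2 ⟨hfp, huniq⟩, (mem_primitiveRoots hfp).2 hwf⟩
    · rintro ⟨f, hfs, hωf⟩
      obtain ⟨hfp, hfd⟩ := (hs f).1 hfs
      have hw := (mem_primitiveRoots hfp).1 hωf
      have hpow := prim_pow a f hfp ω hw
      rw [hfd] at hpow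
      exact ⟨ω ^ a, (mem_primitiveRoots hd).2 hpow, (Polynomial.mem_nthRoots ha).2 rfl⟩

lemma numPart_div (a : ℕ) (ha : 0 < a) (f : ℕ) :
    numPart ((f : ℚ) / (a : ℚ)) = f / f.gcd a := by
  rcases Nat.eq_zero_or_pos f with rfl | hf
  · simp [numPart]
  · have hg : 0 < f.gcd a := Nat.gcd_pos_of_pos_left a hf
    obtain ⟨f', hf'⟩ := Nat.gcd_dvd_left f a
    obtain ⟨a', ha'⟩ := Nat.gcd_dvd_right f a
    have ha'pos : 0 < a' := by
      rcases Nat.eq_zero_or_pos a' with rfl | h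
      · rw [mul_zero] at ha'; omega
      · exact h
    have hfd : f / f.gcd a = f' := Nat.div_eq_of_eq_mul_left hg (hf'.trans (mul_comm _ _))
    have had : a / f.gcd a = a' := Nat.div_eq_of_eq_mul_left hg (ha'.trans (mul_comm _ _))
    have hco : Nat.Coprime f' a' := by
      have h := Nat.coprime_div_gcd_div_gcd (m := f) (n := a) hg
      rwa [hfd, had] at h
    have hq : (f : ℚ) / (a : ℚ) = ((f' : ℤ) : ℚ) / ((a' : ℤ) : ℚ) := by
      rw [show ((f : ℚ)) = (f.gcd a : ℚ) * (f' : ℚ) from by exact_mod_cast hf',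
        show ((a : ℚ)) = (f.gcd a : ℚ) * (a' : ℚ) from by exact_mod_cast ha',
        mul_div_mul_left _ _ (show ((f.gcd a : ℚ)) ≠ 0 from by exact_mod_cast hg.ne')]
      push_cast
      ring
    rw [numPart, hq, Rat.num_div_eq_of_coprime (by exact_mod_cast ha'pos) (by simpa using hco),
      hfd]
    simp

end SPaux

open SPaux in
/-- If `g(x) = ∏_d Φ_d(x)^{h_d}` with rational exponents `h_d` vanishing for
large `d`, then `g(x^a) = ∏_f Φ_f(x)^{h_{[f/a]}}`. -/
theorem subst_pow_cyclotomic_product (a : ℕ) (ha : 0 < a) (h : ℕ → ℚ)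
    (hfin : {d : ℕ | h d ≠ 0}.Finite) :
    substPow a (∏ᶠ d : ℕ, cpowPS (Phi d : PowerSeries ℂ) ((h d : ℂ))) =
      ∏ᶠ f : ℕ, cpowPS (Phi f : PowerSeries ℂ)
        ((h (numPart ((f : ℚ) / (a : ℚ))) : ℂ)) := by
  classical
  have hPhi1 : ∀ n : ℕ,
      PowerSeries.constantCoeff ((Phi n : Polynomial ℂ) : PowerSeries ℂ) = 1 := by
    intro n
    rw [← PowerSeries.coeff_zero_eq_constantCoeff_apply, Polynomial.coeff_coe,
      Polynomial.coeff_zero_eq_eval_zero]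
    simp [Phi, Polynomial.eval_prod]
  set nf : ℕ → ℕ := fun f => numPart ((f : ℚ) / (a : ℚ)) with hnf
  have hnfd : ∀ f, nf f = f / f.gcd a := fun f => numPart_div a ha f
  set T : Finset ℕ := hfin.toFinset with hT
  set B : ℕ := T.sup id with hB
  set U : Finset ℕ := (Finset.range (a * B + 1)).filter (fun f => h (nf f) ≠ 0) with hU
  have hmemT : ∀ d, d ∈ T ↔ h d ≠ 0 := fun d => hfin.mem_toFinset
  have hUB : ∀ f : ℕ, h (nf f) ≠ 0 → f ≤ a * B := by
    intro f hf0
    have hB' : nf f ≤ B := Finset.le_sup (f := id) ((hmemT _).2 hf0)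
    rcases Nat.eq_zero_or_pos f with rfl | hfpos
    · omega
    · have h2 : f = nf f * f.gcd a := by
        rw [hnfd f, Nat.div_mul_cancel (Nat.gcd_dvd_left f a)]
      have h3 : f.gcd a ≤ a := Nat.gcd_le_right _ ha
      calc f = nf f * f.gcd a := h2
        _ ≤ B * a := Nat.mul_le_mul hB' h3
        _ = a * B := Nat.mul_comm _ _
  have L1 : (∏ᶠ d : ℕ, cpowPS (Phi d : PowerSeries ℂ) ((h d : ℂ)))
      = ∏ d ∈ T, cpowPS (Phi d : PowerSeries ℂ) ((h d : ℂ)) := by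
    apply finprod_eq_prod_of_mulSupport_subset
    intro d hd
    simp only [Function.mem_mulSupport] at hd
    simp only [Finset.mem_coe]
    rw [hmemT]
    intro h0
    exact hd (by rw [h0, Rat.cast_zero, cpowPS_zero])
  have R1 : (∏ᶠ f : ℕ, cpowPS (Phi f : PowerSeries ℂ)
        ((h (numPart ((f : ℚ) / (a : ℚ))) : ℂ)))
      = ∏ f ∈ U, cpowPS (Phi f : PowerSeries ℂ) ((h (nf f) : ℂ)) := by
    apply finprod_eq_prod_of_mulSupport_subset
    intro f hf
    simp only [Function.mem_mulSupport] at hf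
    have hf0 : h (nf f) ≠ 0 := by
      intro h0
      exact hf (by rw [show h (numPart ((f : ℚ) / (a : ℚ))) = h (nf f) from rfl, h0,
        Rat.cast_zero, cpowPS_zero])
    simp only [Finset.mem_coe, hU, Finset.mem_filter, Finset.mem_range]
    exact ⟨by have := hUB f hf0; omega, hf0⟩
  rw [L1, R1]
  have hmaps : ∀ f ∈ U, nf f ∈ T := by
    intro f hf
    rw [hU, Finset.mem_filter] at hf
    exact (hmemT _).2 hf.2
  rw [← Finset.prod_fiberwise_of_maps_to hmaps
    (fun f => cpowPS (Phi f : PowerSeries ℂ) ((h (nf f) : ℂ)))]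
  rw [← substHom_apply a ha, map_prod]
  apply Finset.prod_congr rfl
  intro d hdT
  rw [substHom_apply, substPow_cpowPS a ha]
  have hinner : ∀ f ∈ U.filter (fun f => nf f = d),
      cpowPS (Phi f : PowerSeries ℂ) ((h (nf f) : ℂ))
        = cpowPS (Phi f : PowerSeries ℂ) ((h d : ℂ)) := by
    intro f hf
    rw [(Finset.mem_filter.1 hf).2]
  rw [Finset.prod_congr rfl hinner, ← cpowPS_prod _ (fun f _ => hPhi1 f)]
  rw [substPow_coe a ha]
  have hcoe : ((∏ f ∈ U.filter (fun f => nf f = d), Phi f : Polynomial ℂ) : PowerSeries ℂ)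
      = ∏ f ∈ U.filter (fun f => nf f = d), ((Phi f : Polynomial ℂ) : PowerSeries ℂ) := by
    rw [← Polynomial.coeToPowerSeries.ringHom_apply, map_prod]
    rfl
  rw [← hcoe]
  have hpoly : Polynomial.expand ℂ a (Phi d) = ∏ f ∈ U.filter (fun f => nf f = d), Phi f := by
    rcases Nat.eq_zero_or_pos d with rfl | hd
    · have hPhi0 : Phi 0 = 1 := by rw [Phi, primitiveRoots_zero, Finset.prod_empty]
      have hnf0 : nf 0 = 0 := by rw [hnfd 0, Nat.zero_div]
      have hfib : U.filter (fun f => nf f = 0) = {0} := by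
        apply Finset.ext
        intro f
        simp only [Finset.mem_filter, Finset.mem_singleton, hU, Finset.mem_range]
        constructor
        · rintro ⟨⟨_, _⟩, hf0⟩
          rw [hnfd f] at hf0
          have hdvd := Nat.gcd_dvd_left f a
          rcases Nat.eq_zero_or_pos f with rfl | hfpos
          · rfl
          · exfalso
            have hg : 0 < f.gcd a := Nat.gcd_pos_of_pos_left a hfpos
            have hc : f.gcd a * (f / f.gcd a) = f := Nat.mul_div_cancel' hdvd
            rw [hf0, mul_zero] at hc
            omega
        · rintro rfl
          have hh0 : h 0 ≠ 0 := (hmemT 0).1 hdT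
          exact ⟨⟨by omega, by rw [hnf0]; exact hh0⟩, hnf0⟩
      rw [hPhi0, map_one, hfib, Finset.prod_singleton, hPhi0]
    · apply key_cyclo a ha d hd
      intro f
      simp only [Finset.mem_filter, hU, Finset.mem_range]
      constructor
      · rintro ⟨⟨hlt, hne0⟩, hfd⟩
        rw [hnfd f] at hfd
        refine ⟨?_, hfd⟩
        rcases Nat.eq_zero_or_pos f with rfl | hp
        · exfalso
          rw [Nat.zero_div] at hfd
          omega
        · exact hp
      · rintro ⟨hfpos, hfd⟩
        have h1 : nf f = d := by rw [hnfd f]; exact hfd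
        have hhd : h d ≠ 0 := (hmemT d).1 hdT
        have hb := hUB f (by rw [h1]; exact hhd)
        exact ⟨⟨by omega, by rw [h1]; exact hhd⟩, h1⟩
  rw [hpoly]
end
end

section
/- Let a₀,…,a_t be nonnegative integers with t ≥ 1, a₀ > 0, a_t > 0, and A = a₀+⋯+a_t. Suppose H₀,…,H_r ∈ ℚ and the polynomial identity (a₀ + a₁z + ⋯ + a_t z^t)·((H₀ + ⋯ + H_r z^r)(1−z) + z^{r+1}/A) = C₀ + (C₁−C₀)z + ⋯ + (1−C_s)z^{s+1} holds with all C_i ∈ ℤ. Then letting d = gcd(a₀,…,a_t), one gets d/A ∈ ℤ, contradicting 0 < d ≤ a₀ < A; hence no such H_i exist. -/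
open Polynomial

private lemma content_dvd_eval_one (p : ℤ[X]) : p.content ∣ p.eval 1 := by
  rw [eval_eq_sum, Polynomial.sum]
  exact Finset.dvd_sum fun n _ => (content_dvd_coeff n).mul_right _

private lemma telescope (s : ℕ) (Cc : ℕ → ℤ) :
    ∑ i ∈ Finset.Icc 1 s, (Cc i - Cc (i - 1)) = Cc s - Cc 0 := by
  induction s with
  | zero => simp
  | succ n ih => rw [Finset.sum_Icc_succ_top (by omega), ih]; simp

/-- Gauss's-lemma contradiction: with `a₀,…,a_t` nonnegative integers, `t ≥ 1`,
`a₀ > 0`, `a_t > 0`, `A = a₀+⋯+a_t`, there are no rationals `H₀,…,H_r` and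
integers `C₀,…,C_s` with
`(a₀+⋯+a_t z^t)·((H₀+⋯+H_r z^r)(1−z) + z^{r+1}/A)
  = C₀ + (C₁−C₀)z + ⋯ + (C_s−C_{s−1})z^s + (1−C_s)z^{s+1}`. -/
theorem gauss_contradiction (t r s : ℕ) (ht : 1 ≤ t) (a : ℕ → ℕ)
    (ha0 : 0 < a 0) (hat : 0 < a t) (H : ℕ → ℚ) (Cc : ℕ → ℤ)
    (hid :
      (∑ i ∈ Finset.range (t + 1), Polynomial.C ((a i : ℚ)) * X ^ i) *
        ((∑ j ∈ Finset.range (r + 1), Polynomial.C (H j) * X ^ j) * (1 - X) +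
          Polynomial.C ((1 : ℚ) / (∑ i ∈ Finset.range (t + 1), a i : ℕ)) *
            X ^ (r + 1)) =
      Polynomial.C ((Cc 0 : ℚ)) +
        (∑ i ∈ Finset.Icc 1 s, Polynomial.C (((Cc i - Cc (i - 1) : ℤ) : ℚ)) * X ^ i) +
        Polynomial.C (((1 - Cc s : ℤ) : ℚ)) * X ^ (s + 1)) :
    False := by
  classical
  set A : ℕ := ∑ i ∈ Finset.range (t + 1), a i with hA
  -- integer models of the two integer polynomials
  set aZ : ℤ[X] := ∑ i ∈ Finset.range (t + 1), C ((a i : ℤ)) * X ^ i with haZ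
  set Pz : ℤ[X] := C (Cc 0) +
      (∑ i ∈ Finset.Icc 1 s, C ((Cc i - Cc (i - 1) : ℤ)) * X ^ i) +
      C ((1 - Cc s : ℤ)) * X ^ (s + 1) with hPz
  set q : ℚ[X] :=
    (∑ j ∈ Finset.range (r + 1), C (H j) * X ^ j) * (1 - X) +
      C ((1 : ℚ) / (A : ℕ)) * X ^ (r + 1) with hq
  have hmap_aZ : aZ.map (algebraMap ℤ ℚ) =
      ∑ i ∈ Finset.range (t + 1), C ((a i : ℚ)) * X ^ i := by
    simp [haZ, Polynomial.map_sum]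
  have hmap_Pz : Pz.map (algebraMap ℤ ℚ) =
      C ((Cc 0 : ℚ)) +
        (∑ i ∈ Finset.Icc 1 s, C (((Cc i - Cc (i - 1) : ℤ) : ℚ)) * X ^ i) +
        C (((1 - Cc s : ℤ) : ℚ)) * X ^ (s + 1) := by
    simp [hPz, Polynomial.map_sum, Polynomial.map_add]
  -- clear denominators of q
  obtain ⟨b, hb⟩ := IsLocalization.integerNormalization_map_to_map (nonZeroDivisors ℤ) q
  set q₁ : ℤ[X] := IsLocalization.integerNormalization (nonZeroDivisors ℤ) q with hq₁
  have hbne : (b : ℤ) ≠ 0 := nonZeroDivisors.coe_ne_zero b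
  -- the key integer identity
  have hinj : Function.Injective (algebraMap ℤ ℚ) := fun x y h => by exact_mod_cast h
  have hZ : aZ * q₁ = C ((b : ℤ)) * Pz := by
    apply Polynomial.map_injective _ hinj
    rw [Polynomial.map_mul, Polynomial.map_mul, hb, hmap_aZ, map_C, hmap_Pz, ← hid]
    have hcast : ((b : ℤ) : ℚ[X]) = C (((b : ℤ) : ℚ)) := by
      rw [← C_eq_intCast]
    rw [zsmul_eq_mul, hcast]
    simp only [algebraMap_int_eq, eq_intCast, ← C_eq_intCast]
    ring
  -- evaluations at 1
  have heval_aZ : aZ.eval 1 = (A : ℤ) := by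
    simp [haZ, eval_finset_sum, hA]
  have heval_Pz : Pz.eval 1 = 1 := by
    simp only [hPz, eval_add, eval_mul, eval_pow, eval_C, eval_X, one_pow, mul_one,
      eval_finset_sum]
    rw [telescope s Cc]
    ring
  have heval : (A : ℤ) * q₁.eval 1 = (b : ℤ) := by
    have := congrArg (Polynomial.eval 1) hZ
    simpa [heval_aZ, heval_Pz] using this
  -- contents (Gauss's lemma)
  have hcont : aZ.content * q₁.content = normalize ((b : ℤ)) * Pz.content := by
    rw [← content_mul, hZ, content_C_mul]
  have hPzcont : Pz.content = 1 := by
    have h1 : Pz.content ∣ 1 := heval_Pz ▸ content_dvd_eval_one Pz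
    rw [← normalize_content, normalize_eq_one]
    exact isUnit_of_dvd_one h1
  have hcont' : aZ.content * q₁.content = normalize ((b : ℤ)) := by
    rw [hcont, hPzcont, mul_one]
  have hdvd : (b : ℤ) ∣ aZ.content * q₁.eval 1 := by
    have h1 : aZ.content * q₁.content ∣ aZ.content * q₁.eval 1 :=
      mul_dvd_mul_left _ (content_dvd_eval_one q₁)
    rw [hcont'] at h1
    exact (associated_normalize ((b : ℤ))).dvd.trans h1
  obtain ⟨m, hm⟩ := hdvd
  have hAd : (A : ℤ) ∣ aZ.content := by
    refine ⟨m, mul_left_cancel₀ hbne ?_⟩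
    calc (b : ℤ) * aZ.content = (A : ℤ) * q₁.eval 1 * aZ.content := by rw [heval]
      _ = (A : ℤ) * (aZ.content * q₁.eval 1) := by ring
      _ = (A : ℤ) * ((b : ℤ) * m) := by rw [hm]
      _ = (b : ℤ) * ((A : ℤ) * m) := by ring
  have hcoeff0 : aZ.coeff 0 = (a 0 : ℤ) := by
    simp [haZ, finset_sum_coeff, coeff_X_pow]
  have hd0 : aZ.content ∣ (a 0 : ℤ) := hcoeff0 ▸ content_dvd_coeff 0
  -- move to ℕ
  set n : ℕ := aZ.content.natAbs with hn
  have hn1 : A ∣ n := by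
    have := Int.natAbs_dvd_natAbs.mpr hAd
    simpa using this
  have hn2 : n ∣ a 0 := by
    have := Int.natAbs_dvd_natAbs.mpr hd0
    simpa using this
  have hnpos : 0 < n := Nat.pos_of_dvd_of_pos hn2 ha0
  have hle1 : A ≤ n := Nat.le_of_dvd hnpos hn1
  have hle2 : n ≤ a 0 := Nat.le_of_dvd ha0 hn2
  have hAa : a 0 + a t ≤ A := by
    have hsub : ({0, t} : Finset ℕ) ⊆ Finset.range (t + 1) := by
      intro x hx
      simp only [Finset.mem_insert, Finset.mem_singleton] at hx
      rcases hx with h | h <;> simp [h]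
    calc a 0 + a t = ∑ i ∈ ({0, t} : Finset ℕ), a i := by
          rw [Finset.sum_pair (by omega)]
      _ ≤ A := Finset.sum_le_sum_of_subset hsub
  omega
end

section
/- Let A be the Ruzsa set A = { Σᵢ εᵢ 4^i : εᵢ ∈ {0,1} } (base-4 digits in {0,1}) with generating function g(x) = Σ_{a∈A} x^a. Then g(x)·g(x²) = 1/(1−x) in ℂ[[x]], and consequently g(x²)g(x³)g(x⁴)g(x⁶) = 1/((1−x²)(1−x³)). -/
noncomputable section
open Classical

/-- The Ruzsa set: nonnegative integers all of whose base-4 digits are `0`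
or `1`. -/
def ruzsaSet : Set ℕ :=
  {n | ∃ ε : ℕ →₀ ℕ, (∀ i, ε i ≤ 1) ∧ n = ε.sum fun i c => c * 4 ^ i}

/-- The generating function `g(x) = Σ_{a ∈ A} x^a` of the Ruzsa set. -/
def ruzsaGF : PowerSeries ℂ :=
  PowerSeries.mk fun n => if n ∈ ruzsaSet then 1 else 0

/-! ### Auxiliary machinery -/

/-- Recursive membership test for the Ruzsa set. -/
def isR : ℕ → Bool
  | 0 => true
  | (n+1) => decide ((n+1) % 4 ≤ 1) && isR ((n+1)/4)
  decreasing_by exact Nat.div_lt_self (Nat.succ_pos n) (by norm_num)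

lemma isR_iff (n : ℕ) : isR n = true ↔ n % 4 ≤ 1 ∧ isR (n/4) = true := by
  cases n with
  | zero => simp [isR]
  | succ m => rw [isR]; simp

lemma isR_step {c S : ℕ} (hc : c ≤ 1) (hS : isR S = true) : isR (c + 4 * S) = true := by
  rw [isR_iff]
  constructor
  · omega
  · have h1 : (c + 4 * S) / 4 = S := by omega
    rw [h1]; exact hS

lemma isR_sum (N : ℕ) (f : ℕ → ℕ) (hf : ∀ i, f i ≤ 1) :
    isR (∑ i ∈ Finset.range N, f i * 4 ^ i) = true := by
  induction N generalizing f with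
  | zero => simp [isR]
  | succ N ih =>
    rw [Finset.sum_range_succ']
    have : (∑ i ∈ Finset.range N, f (i+1) * 4 ^ (i+1)) + f 0 * 4 ^ 0
        = f 0 + 4 * ∑ i ∈ Finset.range N, f (i+1) * 4 ^ i := by
      rw [Finset.mul_sum, pow_zero, mul_one, add_comm]
      congr 1
      exact Finset.sum_congr rfl fun i _ => by rw [pow_succ]; ring
    rw [this]
    exact isR_step (hf 0) (ih (fun i => f (i+1)) (fun i => hf (i+1)))

lemma mem_ruzsaSet_iff (n : ℕ) : n ∈ ruzsaSet ↔ isR n = true := by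
  constructor
  · rintro ⟨ε, hε, rfl⟩
    set N := (ε.support.sup id) + 1 with hN
    have hsub : ε.support ⊆ Finset.range N := by
      intro i hi
      simp only [Finset.mem_range, hN]
      exact Nat.lt_succ_of_le (Finset.le_sup (f := id) hi)
    rw [Finsupp.sum_of_support_subset ε hsub _ (fun i _ => by simp)]
    exact isR_sum N ε hε
  · induction n using Nat.strong_induction_on with
    | _ n ih =>
      intro hn
      rcases Nat.eq_zero_or_pos n with rfl | hpos
      · exact ⟨0, fun i => by simp, by simp⟩
      · rw [isR_iff] at hn
        obtain ⟨hmod, hdiv⟩ := hn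
        obtain ⟨ε', hε', hsum⟩ := ih (n/4) (Nat.div_lt_self hpos (by norm_num)) hdiv
        refine ⟨Finsupp.single 0 (n % 4) + ε'.mapDomain Nat.succ, ?_, ?_⟩
        · intro i
          cases i with
          | zero =>
            have h2 : (ε'.mapDomain Nat.succ) 0 = 0 := by
              apply Finsupp.mapDomain_notin_range
              rintro ⟨j, hj⟩; exact Nat.succ_ne_zero j hj
            simp [h2, hmod]
          | succ j =>
            have h1 : (Finsupp.single 0 (n % 4)) (j+1) = 0 := by
              simp
            have h2 : (ε'.mapDomain Nat.succ) (j+1) = ε' j :=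
              Finsupp.mapDomain_apply Nat.succ_injective ε' j
            simp [h1, h2, hε' j]
        · rw [Finsupp.sum_add_index' (fun i => by simp) (fun i c₁ c₂ => add_mul c₁ c₂ _)]
          rw [Finsupp.sum_single_index (by simp)]
          rw [Finsupp.sum_mapDomain_index (fun i => by simp)
            (fun i c₁ c₂ => add_mul c₁ c₂ _)]
          have : (ε'.sum fun j c => c * 4 ^ (Nat.succ j)) = 4 * ε'.sum fun j c => c * 4 ^ j := by
            rw [Finsupp.mul_sum]
            apply Finsupp.sum_congr
            intro j _
            rw [pow_succ]; ring
          rw [this, ← hsum]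
          omega

/-- Even-position bits of `n` (as a base-4 number with digits in {0,1}). -/
def epart : ℕ → ℕ
  | 0 => 0
  | (n+1) => (n+1) % 2 + 4 * epart ((n+1)/4)
  decreasing_by exact Nat.div_lt_self (Nat.succ_pos n) (by norm_num)

/-- Odd-position bits of `n`. -/
def opart : ℕ → ℕ
  | 0 => 0
  | (n+1) => ((n+1)/2) % 2 + 4 * opart ((n+1)/4)
  decreasing_by exact Nat.div_lt_self (Nat.succ_pos n) (by norm_num)

lemma epart_eq (n : ℕ) : epart n = n % 2 + 4 * epart (n/4) := by
  cases n with
  | zero => simp [epart]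
  | succ m => rw [epart]

lemma opart_eq (n : ℕ) : opart n = (n/2) % 2 + 4 * opart (n/4) := by
  cases n with
  | zero => simp [opart]
  | succ m => rw [opart]

lemma epart_opart (n : ℕ) :
    isR (epart n) = true ∧ isR (opart n) = true ∧ epart n + 2 * opart n = n := by
  induction n using Nat.strong_induction_on with
  | _ n ih =>
    rcases Nat.eq_zero_or_pos n with rfl | hpos
    · simp [epart, opart, isR]
    · obtain ⟨h1, h2, h3⟩ := ih (n/4) (Nat.div_lt_self hpos (by norm_num))
      refine ⟨?_, ?_, ?_⟩
      · rw [epart_eq]; exact isR_step (by omega) h1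
      · rw [opart_eq]; exact isR_step (by omega) h2
      · rw [epart_eq, opart_eq]; omega

lemma decomp_unique {n a b : ℕ} (ha : isR a = true) (hb : isR b = true)
    (hab : a + 2 * b = n) : a = epart n ∧ b = opart n := by
  induction n using Nat.strong_induction_on generalizing a b with
  | _ n ih =>
    rcases Nat.eq_zero_or_pos n with rfl | hpos
    · have ha0 : a = 0 := by omega
      have hb0 : b = 0 := by omega
      subst ha0; subst hb0
      exact ⟨by simp [epart], by simp [opart]⟩
    · rw [isR_iff] at ha hb
      obtain ⟨ha1, ha2⟩ := ha
      obtain ⟨hb1, hb2⟩ := hb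
      have key : a / 4 + 2 * (b / 4) = n / 4 := by omega
      obtain ⟨e1, e2⟩ := ih (n/4) (Nat.div_lt_self hpos (by norm_num)) ha2 hb2 key
      rw [epart_eq, opart_eq]
      omega

lemma coeff_ruzsaGF (n : ℕ) :
    PowerSeries.coeff n ruzsaGF = if isR n then 1 else 0 := by
  simp only [ruzsaGF, PowerSeries.coeff_mk, mem_ruzsaSet_iff]

/-! ### `substPow` lemmas -/

lemma substPow_one {a : ℕ} (ha : 0 < a) : substPow a 1 = 1 := by
  ext j
  simp only [substPow, PowerSeries.coeff_mk, PowerSeries.coeff_one]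
  by_cases hj : j = 0
  · subst hj; simp
  · rw [if_neg hj]
    by_cases h1 : a ∣ j
    · rw [if_pos h1, if_neg]
      intro h0
      obtain ⟨k, rfl⟩ := h1
      rw [Nat.mul_div_cancel_left k ha] at h0
      subst h0; simp at hj
    · rw [if_neg h1]

lemma substPow_X {a : ℕ} (ha : 0 < a) : substPow a PowerSeries.X = PowerSeries.X ^ a := by
  ext j
  simp only [substPow, PowerSeries.coeff_mk, PowerSeries.coeff_X, PowerSeries.coeff_X_pow]
  by_cases h1 : a ∣ j
  · rw [if_pos h1]
    obtain ⟨k, rfl⟩ := h1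
    rw [Nat.mul_div_cancel_left k ha]
    by_cases hk : k = 1
    · subst hk; simp
    · rw [if_neg hk,
        if_neg fun h => hk (Nat.eq_of_mul_eq_mul_left ha (h.trans (mul_one a).symm))]
  · rw [if_neg h1, if_neg (by intro h; exact h1 ⟨1, by rw [h, mul_one]⟩)]

lemma substPow_sub (a : ℕ) (F G : PowerSeries ℂ) :
    substPow a (F - G) = substPow a F - substPow a G := by
  ext j
  simp only [substPow, map_sub, PowerSeries.coeff_mk]
  split_ifs <;> simp

lemma substPow_mul {a : ℕ} (ha : 0 < a) (F G : PowerSeries ℂ) :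
    substPow a (F * G) = substPow a F * substPow a G := by
  ext n
  simp only [substPow, PowerSeries.coeff_mk, PowerSeries.coeff_mul]
  by_cases hn : a ∣ n
  · rw [if_pos hn]
    obtain ⟨m, rfl⟩ := hn
    rw [Nat.mul_div_cancel_left m ha]
    refine Eq.trans ?_ (Finset.sum_subset
      (Finset.filter_subset (fun x : ℕ × ℕ => a ∣ x.1) (Finset.HasAntidiagonal.antidiagonal (a * m))) ?_)
    · refine Finset.sum_nbij' (i := fun (x : ℕ × ℕ) => (a * x.1, a * x.2))
        (j := fun (x : ℕ × ℕ) => (x.1 / a, x.2 / a)) ?_ ?_ ?_ ?_ ?_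
      · intro x hx
        simp only [Finset.HasAntidiagonal.mem_antidiagonal] at hx
        simp only [Finset.mem_filter, Finset.HasAntidiagonal.mem_antidiagonal]
        exact ⟨by rw [← Nat.mul_add, hx], Dvd.intro _ rfl⟩
      · intro x hx
        simp only [Finset.mem_filter, Finset.HasAntidiagonal.mem_antidiagonal] at hx
        simp only [Finset.HasAntidiagonal.mem_antidiagonal]
        obtain ⟨hsum, h1⟩ := hx
        have h2 : a ∣ x.2 := (Nat.dvd_add_right h1).mp (hsum ▸ Dvd.intro m rfl)
        obtain ⟨u, hu⟩ := h1; obtain ⟨v, hv⟩ := h2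
        rw [hu, hv, Nat.mul_div_cancel_left u ha, Nat.mul_div_cancel_left v ha]
        apply Nat.eq_of_mul_eq_mul_left ha
        rw [Nat.mul_add, ← hu, ← hv, hsum]
      · intro x _
        simp [Nat.mul_div_cancel_left _ ha]
      · intro x hx
        simp only [Finset.mem_filter, Finset.HasAntidiagonal.mem_antidiagonal] at hx
        obtain ⟨hsum, h1⟩ := hx
        have h2 : a ∣ x.2 := (Nat.dvd_add_right h1).mp (hsum ▸ Dvd.intro m rfl)
        obtain ⟨u, hu⟩ := h1; obtain ⟨v, hv⟩ := h2
        show (a * (x.1 / a), a * (x.2 / a)) = x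
        rw [hu, hv, Nat.mul_div_cancel_left u ha, Nat.mul_div_cancel_left v ha,
          ← hu, ← hv]
      · intro x _
        rw [if_pos (Dvd.intro _ rfl), if_pos (Dvd.intro _ rfl),
          Nat.mul_div_cancel_left _ ha, Nat.mul_div_cancel_left _ ha]
    · intro x hx hnx
      rw [Finset.mem_filter, not_and] at hnx
      rw [if_neg (hnx hx), zero_mul]
  · rw [if_neg hn]
    symm
    apply Finset.sum_eq_zero
    intro x hx
    simp only [Finset.HasAntidiagonal.mem_antidiagonal] at hx
    by_cases h1 : a ∣ x.1
    · rw [if_neg (fun h2 => hn (hx ▸ Nat.dvd_add h1 h2)), mul_zero]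
    · rw [if_neg h1, zero_mul]

lemma substPow_substPow {a b : ℕ} (ha : 0 < a) (hb : 0 < b) (F : PowerSeries ℂ) :
    substPow a (substPow b F) = substPow (a * b) F := by
  ext j
  simp only [substPow, PowerSeries.coeff_mk]
  by_cases h1 : a ∣ j
  · rw [if_pos h1]
    have hiff : b ∣ j / a ↔ a * b ∣ j := by
      rw [Nat.dvd_div_iff_mul_dvd h1]
    by_cases h2 : b ∣ j / a
    · rw [if_pos h2, if_pos (hiff.mp h2), Nat.div_div_eq_div_mul]
    · rw [if_neg h2, if_neg (fun h => h2 (hiff.mpr h))]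
  · rw [if_neg h1, if_neg (fun h => h1 (dvd_trans (Dvd.intro b rfl) h))]

/-! ### The geometric series -/

lemma geom_mul_one_sub_X :
    (PowerSeries.mk fun _ : ℕ => (1 : ℂ)) * (1 - PowerSeries.X) = 1 := by
  ext n
  rw [mul_sub, mul_one, map_sub]
  cases n with
  | zero =>
    simp [PowerSeries.coeff_zero_eq_constantCoeff]
  | succ m =>
    rw [PowerSeries.coeff_succ_mul_X]
    simp [PowerSeries.coeff_one]

/-! ### Main theorem -/

lemma main_identity :
    ruzsaGF * substPow 2 ruzsaGF * (1 - PowerSeries.X) = 1 := by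
  have key : ruzsaGF * substPow 2 ruzsaGF = PowerSeries.mk fun _ : ℕ => (1 : ℂ) := by
    ext n
    rw [PowerSeries.coeff_mul, PowerSeries.coeff_mk]
    obtain ⟨he, ho, hsum⟩ := epart_opart n
    rw [Finset.sum_eq_single_of_mem (epart n, 2 * opart n)]
    · simp only [substPow, PowerSeries.coeff_mk, coeff_ruzsaGF]
      rw [if_pos he, if_pos (Dvd.intro _ rfl)]
      have : 2 * opart n / 2 = opart n := by omega
      rw [this, if_pos ho, one_mul]
    · simp only [Finset.HasAntidiagonal.mem_antidiagonal]; exact hsum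
    · intro x hx hne
      simp only [Finset.HasAntidiagonal.mem_antidiagonal] at hx
      simp only [substPow, PowerSeries.coeff_mk, coeff_ruzsaGF]
      by_cases h1 : isR x.1 = true
      · by_cases h2 : 2 ∣ x.2
        · by_cases h3 : isR (x.2 / 2) = true
          · exfalso
            obtain ⟨u1, u2⟩ := decomp_unique (n := n) h1 h3 (by omega)
            apply hne
            have : x.2 = 2 * (x.2 / 2) := by omega
            rw [Prod.ext_iff]
            exact ⟨u1, by omega⟩
          · rw [if_pos h2, if_neg h3, mul_zero]
        · rw [if_neg h2, mul_zero]
      · rw [if_neg h1, zero_mul]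
  rw [key]
  exact geom_mul_one_sub_X

/-- For the Ruzsa set, `g(x)·g(x²) = 1/(1−x)` and consequently
`g(x²)g(x³)g(x⁴)g(x⁶) = 1/((1−x²)(1−x³))` in `ℂ[[x]]` (the identities are
stated multiplied through by the denominators). -/
theorem ruzsa_generating_function :
    ruzsaGF * substPow 2 ruzsaGF * (1 - PowerSeries.X) = 1 ∧
    substPow 2 ruzsaGF * substPow 3 ruzsaGF * substPow 4 ruzsaGF *
        substPow 6 ruzsaGF *
        ((1 - PowerSeries.X ^ 2) * (1 - PowerSeries.X ^ 3)) = 1 := by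
  have H1 := main_identity
  have subst_id : ∀ a : ℕ, 0 < a →
      substPow a ruzsaGF * substPow (a * 2) ruzsaGF * (1 - PowerSeries.X ^ a) = 1 := by
    intro a ha
    have := congrArg (substPow a) H1
    rw [substPow_mul ha, substPow_mul ha, substPow_sub, substPow_one ha, substPow_X ha,
      substPow_substPow ha (by norm_num)] at this
    exact this
  have H2 := subst_id 2 (by norm_num)
  have H3 := subst_id 3 (by norm_num)
  norm_num at H2 H3
  refine ⟨H1, ?_⟩
  calc substPow 2 ruzsaGF * substPow 3 ruzsaGF * substPow 4 ruzsaGF *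
        substPow 6 ruzsaGF * ((1 - PowerSeries.X ^ 2) * (1 - PowerSeries.X ^ 3))
      = (substPow 2 ruzsaGF * substPow 4 ruzsaGF * (1 - PowerSeries.X ^ 2)) *
        (substPow 3 ruzsaGF * substPow 6 ruzsaGF * (1 - PowerSeries.X ^ 3)) := by ring
    _ = 1 := by rw [H2, H3, one_mul]
end
end
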